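/- arXiv:2505.13285 — 10 statements merged into one kernel-verified Lean document; each statement's English description precedes it below -/
import Mathlib

section
/- For every connected compact set K ⊆ ℂ with diameter d = d(K) > 0 and nonzero minimal width w = w(K) > 0, and every integer n with n > d²/(459·w²), one has M_n(K) ≤ 600·w·n/d². -/
open Polynomial

/-- The sup-norm of a polynomial over a set `K ⊆ ℂ`. -/
noncomputable def polyNorm (K : Set ℂ) (P : Polynomial ℂ) : ℝ :=
  sSup ((fun z => ‖P.eval z‖) '' K)

/-- The Tur\'an type inverse Markov factor
`M_n(K) = inf { ‖P'‖_K / ‖P‖_K : P of exact degree n with all zeros in K }`. -/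
noncomputable def invMarkov (n : ℕ) (K : Set ℂ) : ℝ :=
  sInf { r : ℝ | ∃ P : Polynomial ℂ, P ≠ 0 ∧ P.natDegree = n ∧
    (∀ z : ℂ, P.IsRoot z → z ∈ K) ∧
    r = polyNorm K (Polynomial.derivative P) / polyNorm K P }

/-- The minimal width of a set `K ⊆ ℂ`: the infimum over unit directions `u` of the
width of `K` in direction `u`. -/
noncomputable def minWidth (K : Set ℂ) : ℝ :=
  sInf { r : ℝ | ∃ u : ℂ, ‖u‖ = 1 ∧
    r = sSup ((fun z => ((starRingEnd ℂ) u * z).re) '' K)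
      - sInf ((fun z => ((starRingEnd ℂ) u * z).re) '' K) }



lemma aux_ind (e : ℕ) : (2*e + 11 : ℝ) ≤ 11 * (49/36 : ℝ)^e := by
  induction e with
  | zero => norm_num
  | succ e ih =>
    have h1 : (1:ℝ) ≤ (49/36 : ℝ)^e := one_le_pow₀ (by norm_num)
    push_cast; push_cast at ih; rw [pow_succ]; nlinarith

lemma bern (e : ℕ) (c : ℝ) (hc0 : 0 ≤ c) (hc1 : c ≤ 1) :
    (1 + e * c) * (1 - c)^e ≤ 1 := by
  have h1 : (1 + (e:ℝ) * c) ≤ (1 + c)^e := by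
    have := one_add_mul_le_pow (a := c) (by linarith) e
    linarith [this]
  have h2 : (0:ℝ) ≤ (1-c)^e := pow_nonneg (by linarith) e
  calc (1 + (e:ℝ)*c) * (1-c)^e ≤ (1+c)^e * (1-c)^e :=
        mul_le_mul_of_nonneg_right h1 h2
    _ = ((1+c)*(1-c))^e := (mul_pow _ _ _).symm
    _ ≤ 1 := pow_le_one₀ (by nlinarith) (by nlinarith)

lemma le_of_sq_le_sq' (a b : ℝ) (ha : 0 ≤ a) (hb : 0 ≤ b) (h : a^2 ≤ b^2) : a ≤ b := by
  nlinarith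

lemma lt_of_sq_lt_sq'' (a b : ℝ) (hb : 0 ≤ b) (h : a^2 < b^2) : a < b := by
  nlinarith [abs_nonneg a, sq_abs a, le_abs_self a]

lemma prod_bound1 (s t q : ℝ) (hs0 : 0 ≤ s) (ht0 : 0 ≤ t) (hq0 : 0 ≤ q) :
    (s^2+q^2)*(t^2+q^2) ≤ (s*t + q*(s+t) + q^2)^2 := by
  nlinarith [mul_nonneg (mul_nonneg hq0 hs0) ht0, mul_nonneg (mul_nonneg (mul_nonneg hq0 hq0) hs0) ht0,
    mul_nonneg (mul_nonneg (mul_nonneg hq0 hq0) hq0) (add_nonneg hs0 ht0),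
    mul_nonneg (mul_nonneg (mul_nonneg hs0 ht0) hs0) ht0]

lemma small_bound (s t q : ℝ) (h1 : s*t ≤ 1/5) (h2 : s+t ≤ 1+q^2)
    (h3 : 0 < q) (h4 : q < 1/74) (h5 : 0 ≤ s+t) :
    s*t + q*(s+t) + q^2 ≤ 3/14 := by
  have hq2 : q^2 < 1/5476 := by nlinarith
  have h6 : q*(s+t) ≤ q*(1+q^2) := by
    apply mul_le_mul_of_nonneg_left h2 h3.le
  have h7 : q*(1+q^2) ≤ (1/74)*(1+1/5476) := by nlinarith
  nlinarith

lemma quarter_bound (s t q2 : ℝ) (h1 : 1/5 < s*t) (h2 : s+t ≤ 1+q2)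
    (h3 : 0 ≤ q2) (h4 : q2 ≤ 1/5476) (hs0 : 0 ≤ s) (ht0 : 0 ≤ t) : 1/4 ≤ s := by
  by_contra hcon
  push_neg at hcon
  have ht' : t ≤ 1 + q2 - s := by linarith
  have h5 : s*t ≤ s*(1+q2-s) := mul_le_mul_of_nonneg_left ht' hs0
  nlinarith [mul_nonneg (by linarith : (0:ℝ) ≤ 1/4 - s) (by linarith : (0:ℝ) ≤ 3/4 + q2 - s)]

lemma prod_bound2 (s t q : ℝ) (hs : 1/4 ≤ s) (ht : 1/4 ≤ t) (hq0 : 0 ≤ q) :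
    (s^2+q^2)*(t^2+q^2) ≤ ((s*t)*(1+16*q^2))^2 := by
  have h16t : (0:ℝ) ≤ 16*t^2 - 1 := by nlinarith
  have h16s : (0:ℝ) ≤ 16*s^2 - 1 := by nlinarith
  have hst : (1:ℝ)/256 ≤ s^2*t^2 := by nlinarith
  have a1 : (0:ℝ) ≤ q^2*s^2*(16*t^2-1) :=
    mul_nonneg (mul_nonneg (sq_nonneg q) (sq_nonneg s)) h16t
  have a2 : (0:ℝ) ≤ q^2*t^2*(16*s^2-1) :=
    mul_nonneg (mul_nonneg (sq_nonneg q) (sq_nonneg t)) h16s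
  have a3 : (0:ℝ) ≤ q^2*q^2*(256*(s^2*t^2)-1) :=
    mul_nonneg (mul_nonneg (sq_nonneg q) (sq_nonneg q)) (by linarith)
  nlinarith [a1, a2, a3]

set_option maxHeartbeats 1000000 in
/-- The 1-D analytic core lemma (all lengths normalized by the diameter). -/
lemma core (n : ℕ) (q D x u v : ℝ) (hn : 2 ≤ n)
    (hq0 : 0 < q) (hqn : 1 < 459 * n * q^2)
    (hD0 : 0 ≤ D) (hD1 : D ≤ 1) (hD2 : 1 - q^2 ≤ D^2)
    (hu0 : 0 ≤ u) (hv0 : 0 ≤ v) (hu1 : u ≤ 1) (hv1 : v ≤ 1)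
    (hus : |x| ≤ u) (hvt : |x - D| ≤ v)
    (hu2 : u^2 ≤ x^2 + q^2) (hv2 : v^2 ≤ (x - D)^2 + q^2) :
    (n:ℝ) * u^(n - n/2 - 1) * v^(n/2 - 1) * (|x - ((n - n/2 : ℕ) : ℝ) * D / n| + q)
      ≤ 600 * q * n * max ((1/2:ℝ)^n) (u^(n - n/2) * v^(n/2)) := by
  set k : ℕ := n - n/2 with hk
  set m : ℕ := n/2 with hm
  set e : ℕ := n/2 - 1 with he
  have hkm : k + m = n := by omega
  have hm1 : 1 ≤ m := by omega
  have hk1 : 1 ≤ k := by omega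
  have hem : e + 1 = m := by omega
  have hkn : (k:ℝ) ≤ (n:ℝ) := by exact_mod_cast (by omega : k ≤ n)
  have hn0 : (0:ℝ) < n := by positivity
  set s : ℝ := |x| with hs
  set t : ℝ := |x - D| with ht
  set p : ℝ := (k:ℝ)*D/n with hp
  set ξ : ℝ := |x - p| with hxi
  have hs0 : 0 ≤ s := abs_nonneg _
  have ht0 : 0 ≤ t := abs_nonneg _
  have hs1 : s ≤ 1 := le_trans hus hu1
  have ht1 : t ≤ 1 := le_trans hvt hv1
  have hp0 : 0 ≤ p := by positivity
  have hpD : p ≤ D := by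
    rw [hp, div_le_iff₀ hn0, mul_comm (k:ℝ) D]
    exact mul_le_mul_of_nonneg_left hkn hD0
  have hξ0 : 0 ≤ ξ := abs_nonneg _
  have hξ1 : ξ ≤ 1 := by
    rcases le_total x p with h | h
    · have h1 : ξ = p - x := by rw [hxi, abs_sub_comm]; exact abs_of_nonneg (by linarith)
      have h2 : t = D - x := by rw [ht, abs_sub_comm]; exact abs_of_nonneg (by linarith)
      linarith only [h1, h2, hpD, ht1]
    · have h1 : ξ = x - p := abs_of_nonneg (by linarith)
      have h2 : x ≤ s := le_abs_self x
      linarith only [h1, h2, hp0, hs1]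
  have hξq0 : (0:ℝ) ≤ ξ + q := by linarith only [hξ0, hq0]
  have huv0 : (0:ℝ) ≤ u * v := mul_nonneg hu0 hv0
  have hukm : u^(k-1) * u = u^k := by
    rw [← pow_succ, Nat.sub_add_cancel hk1]
  have hvem : v^e * v = v^m := by
    rw [← pow_succ, hem]
  by_cases hT1 : ξ + q ≤ 600*q*(u*v)
  · -- arm 2 : compare with |P(z)|
    have h1 : (n:ℝ) * u^(k-1) * v^e * (ξ + q) ≤ (n:ℝ) * u^(k-1) * v^e * (600*q*(u*v)) := by
      apply mul_le_mul_of_nonneg_left hT1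
      positivity
    have h2 : (n:ℝ) * u^(k-1) * v^e * (600*q*(u*v)) = 600*q*n*(u^k * v^m) := by
      rw [← hukm, ← hvem]; ring
    have h3 : u^k * v^m ≤ max ((1/2:ℝ)^n) (u^k * v^m) := le_max_right _ _
    calc (n:ℝ) * u^(k-1) * v^e * (ξ + q)
        ≤ 600*q*n*(u^k * v^m) := by rw [← h2]; exact h1
      _ ≤ 600*q*n* max ((1/2:ℝ)^n) (u^k * v^m) := by
          apply mul_le_mul_of_nonneg_left h3; positivity
  · push_neg at hT1
    have hB : 600*q*(u*v) < ξ + q := hT1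
    -- reduce to the normalized estimate
    suffices hS : (u*v)^e * (ξ + q) ≤ 75 * q * (1/4:ℝ)^e by
      have hue : u^(k-1) ≤ u^e := pow_le_pow_of_le_one hu0 hu1 (by omega)
      have h1 : u^(k-1) * v^e ≤ (u*v)^e := by
        rw [mul_pow]
        exact mul_le_mul_of_nonneg_right hue (pow_nonneg hv0 e)
      have h2 : (n:ℝ) * u^(k-1) * v^e * (ξ + q) ≤ (n:ℝ) * ((u*v)^e * (ξ + q)) := by
        have h2a := mul_le_mul_of_nonneg_right h1 hξq0
        have hnn : (0:ℝ) ≤ (n:ℝ) := by positivity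
        calc (n:ℝ) * u^(k-1) * v^e * (ξ + q) = (n:ℝ) * (u^(k-1) * v^e * (ξ + q)) := by ring
          _ ≤ (n:ℝ) * ((u*v)^e * (ξ + q)) := mul_le_mul_of_nonneg_left h2a hnn
      have hne : n ≤ 2*e+3 := by omega
      have h3 : 75 * (1/4:ℝ)^e ≤ 600 * (1/2:ℝ)^n := by
        have hh : ((1/2:ℝ))^(2*e+3) ≤ (1/2:ℝ)^n :=
          pow_le_pow_of_le_one (by norm_num) (by norm_num) hne
        have hid : ((1/2:ℝ))^(2*e+3) = (1/4:ℝ)^e * (1/8) := by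
          rw [pow_add, pow_mul]; norm_num
        rw [hid] at hh
        linarith only [hh]
      have h4 : (n:ℝ) * ((u*v)^e * (ξ + q)) ≤ (n:ℝ) * (75 * q * (1/4:ℝ)^e) := by
        apply mul_le_mul_of_nonneg_left hS (by positivity)
      have h5 : (n:ℝ) * (75 * q * (1/4:ℝ)^e) ≤ 600*q*n*((1/2:ℝ)^n) := by
        have h5a := mul_le_mul_of_nonneg_left h3
          (mul_nonneg (le_of_lt hq0) (le_of_lt hn0) : (0:ℝ) ≤ q*n)
        calc (n:ℝ) * (75 * q * (1/4:ℝ)^e) = q*n*(75 * (1/4:ℝ)^e) := by ring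
          _ ≤ q*n*(600 * (1/2:ℝ)^n) := h5a
          _ = 600*q*n*((1/2:ℝ)^n) := by ring
      have h6 : (600:ℝ)*q*n*((1/2:ℝ)^n) ≤ 600*q*n*max ((1/2:ℝ)^n) (u^k * v^m) := by
        apply mul_le_mul_of_nonneg_left (le_max_left _ _); positivity
      linarith only [h2, h4, h5, h6]
    -- now prove hS
    by_cases hT2 : 1/74 ≤ q
    · have hξ75 : ξ + q ≤ 75*q := by linarith only [hξ1, hT2, hq0]
      have hA : u*v ≤ 1/4 := by
        have h1 : 600*q*(u*v) < 75*q := by linarith only [hB, hξ75]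
        have h2 : q*(u*v) < q*(1/8) := by linarith only [h1]
        have h3 : u*v < 1/8 := (mul_lt_mul_iff_right₀ hq0).mp h2
        linarith only [h3]
      calc (u*v)^e * (ξ + q) ≤ (1/4:ℝ)^e * (75*q) :=
            mul_le_mul (pow_le_pow_left₀ huv0 hA e) hξ75 hξq0 (by positivity)
        _ = 75 * q * (1/4:ℝ)^e := by ring
    · push_neg at hT2
      have hq74 : q < 1/74 := hT2
      have hq2s : q^2 < 1/5476 := by nlinarith only [hq74, hq0]
      have hn12 : 12 ≤ n := by
        by_contra hcon
        push_neg at hcon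
        have h1 : (n:ℝ) ≤ 11 := by exact_mod_cast (by omega : n ≤ 11)
        have h2 : 459*(n:ℝ)*q^2 ≤ 459*11*q^2 := by
          nlinarith only [h1, sq_nonneg q]
        linarith only [hqn, h2, hq2s]
      have hn2e : (n:ℝ) ≤ 2*(e:ℝ)+3 := by
        have : n ≤ 2*e+3 := by omega
        exact_mod_cast this
      have he1 : 1 ≤ e := by omega
      have he1R : (1:ℝ) ≤ (e:ℝ) := by exact_mod_cast he1
      have hDq : 1 - q^2 ≤ D := by
        have h1 : D^2 ≤ D := by nlinarith only [hD0, hD1]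
        linarith only [h1, hD2]
      have hsum : s + t ≤ 1 + q^2 := by
        rcases le_total x 0 with hx | hx
        · have h1 : s = -x := abs_of_nonpos hx
          have h2 : t = D - x := by rw [ht, abs_sub_comm]; exact abs_of_nonneg (by linarith)
          have h3 : D - x ≤ 1 := by rw [← h2]; exact ht1
          linarith only [h1, h2, h3, hDq]
        · rcases le_total D x with hx2 | hx2
          · have h1 : s = x := abs_of_nonneg hx
            have h2 : t = x - D := abs_of_nonneg (by linarith)
            have h3 : x ≤ 1 := by rw [← h1]; exact hs1
            linarith only [h1, h2, h3, hDq]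
          · have h1 : s = x := abs_of_nonneg hx
            have h2 : t = D - x := by rw [ht, abs_sub_comm]; exact abs_of_nonneg (by linarith)
            have h4 : (0:ℝ) ≤ q^2 := sq_nonneg q
            linarith only [h1, h2, hD1, h4]
      have hx2s : x^2 = s^2 := (sq_abs x).symm
      have hxD2t : (x-D)^2 = t^2 := (sq_abs (x-D)).symm
      have huv2 : (u*v)^2 ≤ (s^2+q^2)*(t^2+q^2) := by
        rw [← hx2s, ← hxD2t]
        have h1 := mul_le_mul hu2 hv2 (sq_nonneg v) (by positivity)
        calc (u*v)^2 = u^2 * v^2 := by ring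
          _ ≤ (x^2+q^2)*((x-D)^2+q^2) := h1
      by_cases hT3 : s*t ≤ 1/5
      · -- near the ends / small product
        have hA2 : u*v ≤ 3/14 := by
          have h2 := prod_bound1 s t q hs0 ht0 hq0.le
          have h3 := small_bound s t q hT3 hsum hq0 hq74 (by linarith only [hs0, ht0])
          have h4 : (u*v)^2 ≤ (s*t + q*(s+t) + q^2)^2 := le_trans huv2 h2
          apply le_of_sq_le_sq' _ _ huv0 (by norm_num)
          calc (u*v)^2 ≤ (s*t + q*(s+t) + q^2)^2 := h4
            _ ≤ (3/14)^2 := by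
                apply pow_le_pow_left₀ _ h3
                have := mul_nonneg hs0 ht0
                have := mul_nonneg hq0.le (add_nonneg hs0 ht0)
                positivity
        have key : (6/7:ℝ)^e ≤ 74*q := by
          have hP0 : (0:ℝ) ≤ (36/49:ℝ)^e := by positivity
          have hprod : (36/49:ℝ)^e * (49/36:ℝ)^e = 1 := by
            rw [← mul_pow]; norm_num
          have haux := aux_ind e
          have hP11 : (36/49:ℝ)^e * (2*(e:ℝ)+11) ≤ 11 := by
            calc (36/49:ℝ)^e * (2*(e:ℝ)+11) ≤ (36/49:ℝ)^e * (11*(49/36:ℝ)^e) :=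
                  mul_le_mul_of_nonneg_left haux hP0
              _ = 11 * ((36/49:ℝ)^e * (49/36:ℝ)^e) := by ring
              _ = 11 := by rw [hprod]; norm_num
          have h5 : (36/49:ℝ)^e * (459*(2*(e:ℝ)+3)) ≤ 5476 := by
            have h5a : (36/49:ℝ)^e * (2*(e:ℝ)+3) ≤ (36/49:ℝ)^e * (2*(e:ℝ)+11) := by
              apply mul_le_mul_of_nonneg_left _ hP0
              linarith only []
            have h5b : (36/49:ℝ)^e * (459*(2*(e:ℝ)+3)) = 459*((36/49:ℝ)^e * (2*(e:ℝ)+3)) := by ring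
            rw [h5b]
            calc 459*((36/49:ℝ)^e * (2*(e:ℝ)+3)) ≤ 459*((36/49:ℝ)^e * (2*(e:ℝ)+11)) := by
                  apply mul_le_mul_of_nonneg_left h5a (by norm_num)
              _ ≤ 459*11 := mul_le_mul_of_nonneg_left hP11 (by norm_num)
              _ ≤ 5476 := by norm_num
          have h7 : (1:ℝ) < 459*(2*(e:ℝ)+3)*q^2 := by
            have h7a : 459*(n:ℝ)*q^2 ≤ 459*(2*(e:ℝ)+3)*q^2 := by
              apply mul_le_mul_of_nonneg_right _ (sq_nonneg q)
              linarith only [hn2e]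
            linarith only [hqn, h7a]
          have h6 : ((6/7:ℝ)^e)^2 ≤ (74*q)^2 := by
            have hsq : ((6/7:ℝ)^e)^2 = (36/49:ℝ)^e := by
              rw [← pow_mul, mul_comm e 2, pow_mul]; norm_num
            have h6a : (36/49:ℝ)^e * 1 ≤ (36/49:ℝ)^e * (459*(2*(e:ℝ)+3)*q^2) :=
              mul_le_mul_of_nonneg_left h7.le hP0
            have h6b : (36/49:ℝ)^e * (459*(2*(e:ℝ)+3)*q^2)
                = ((36/49:ℝ)^e * (459*(2*(e:ℝ)+3)))*q^2 := by ring
            have h6c : ((36/49:ℝ)^e * (459*(2*(e:ℝ)+3)))*q^2 ≤ 5476*q^2 :=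
              mul_le_mul_of_nonneg_right h5 (sq_nonneg q)
            have h6d : (74*q)^2 = 5476*q^2 := by ring
            rw [hsq, h6d]
            rw [h6b] at h6a
            linarith only [h6a, h6c]
          exact le_of_sq_le_sq' _ _ (by positivity) (by positivity) h6
        have hA4 : (u*v)^e ≤ (3/14:ℝ)^e := pow_le_pow_left₀ huv0 hA2 e
        have hsplit : (3/14:ℝ)^e = (6/7:ℝ)^e * (1/4:ℝ)^e := by
          rw [← mul_pow]; norm_num
        have hξ75 : ξ + q ≤ 75/74 := by linarith only [hξ1, hq74]
        calc (u*v)^e * (ξ + q) ≤ (3/14:ℝ)^e * (75/74) :=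
              mul_le_mul hA4 hξ75 hξq0 (by positivity)
          _ = (6/7:ℝ)^e * (75/74) * (1/4:ℝ)^e := by rw [hsplit]; ring
          _ ≤ (74*q) * (75/74) * (1/4:ℝ)^e := by
              apply mul_le_mul_of_nonneg_right _ (by positivity)
              apply mul_le_mul_of_nonneg_right key (by norm_num)
          _ = 75 * q * (1/4:ℝ)^e := by ring
      · -- middle region
        push_neg at hT3
        have hxpos : 0 < x := by
          by_contra hcon
          push_neg at hcon
          have h1 : s = -x := abs_of_nonpos hcon
          have h2 : t = D - x := by rw [ht, abs_sub_comm]; exact abs_of_nonneg (by linarith)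
          have h3 : D - x ≤ 1 := by rw [← h2]; exact ht1
          have h4 : s ≤ 1 - D := by linarith only [h1, h2, h3]
          have h5 : s*t ≤ (1-D)*1 := mul_le_mul h4 ht1 ht0 (by linarith only [h4, hs0])
          have h6 : (1-D) ≤ q^2 := by linarith only [hDq]
          nlinarith only [hT3, h5, h6, hq2s]
        have hxD : x < D := by
          by_contra hcon
          push_neg at hcon
          have h1 : t = x - D := abs_of_nonneg (by linarith)
          have h2 : x ≤ 1 := le_trans (le_abs_self x) hs1
          have h4 : t ≤ 1 - D := by linarith only [h1, h2]
          have h5 : s*t ≤ 1*(1-D) := mul_le_mul hs1 h4 ht0 (by norm_num)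
          have h6 : (1-D) ≤ q^2 := by linarith only [hDq]
          nlinarith only [hT3, h5, h6, hq2s]
        have hsx : s = x := abs_of_nonneg hxpos.le
        have htx : t = D - x := by rw [ht, abs_sub_comm]; exact abs_of_nonneg (by linarith)
        set η : ℝ := |x - D/2| with hetadef
        have hη0 : 0 ≤ η := abs_nonneg _
        have hη2 : η^2 = (x - D/2)^2 := sq_abs _
        have hst_id : s*t ≤ 1/4 - η^2 := by
          rw [hsx, htx, hη2]
          have hD2le : D^2 ≤ 1 := by nlinarith only [hD0, hD1]
          nlinarith only [hD2le]
        have hη20 : η^2 < 1/20 := by linarith only [hT3, hst_id]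
        have huvst : s*t ≤ u*v := mul_le_mul hus hvt ht0 hu0
        have hξ119 : 119*q < ξ := by
          have h1 : (1:ℝ)/5 ≤ u*v := le_trans hT3.le huvst
          have h2 : q*(1/5) ≤ q*(u*v) := mul_le_mul_of_nonneg_left h1 hq0.le
          linarith only [hB, h2, hq0]
        have hnq : 4/25 < (n:ℝ)*q := by
          have h12R : (12:ℝ) ≤ n := by exact_mod_cast hn12
          have h1 : (n:ℝ)*1 < (n:ℝ)*(459*(n:ℝ)*q^2) := by
            apply mul_lt_mul_of_pos_left hqn hn0
          have h2 : ((n:ℝ)*q)^2 > (n:ℝ)/459 := by nlinarith only [h1]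
          have h3 : (n:ℝ)/459 ≥ 12/459 := by linarith only [h12R]
          apply lt_of_sq_lt_sq'' _ _ (by positivity)
          nlinarith only [h2, h3]
        have hpd : |p - D/2| ≤ 1/(2*(n:ℝ)) := by
          have hform : p - D/2 = D*(2*(k:ℝ) - n)/(2*n) := by
            rw [hp]; field_simp
          have h2k1 : 2*(k:ℝ) - n ≤ 1 := by
            have hh : 2*k ≤ n + 1 := by omega
            have hh2 : 2*(k:ℝ) ≤ (n:ℝ) + 1 := by exact_mod_cast hh
            linarith only [hh2]
          have h2k0 : 0 ≤ 2*(k:ℝ) - n := by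
            have hh : n ≤ 2*k := by omega
            have hh2 : (n:ℝ) ≤ 2*(k:ℝ) := by exact_mod_cast hh
            linarith only [hh2]
          rw [hform, abs_div, abs_mul]
          rw [abs_of_nonneg hD0, abs_of_nonneg h2k0,
            abs_of_nonneg (by positivity : (0:ℝ) ≤ 2*(n:ℝ))]
          gcongr
          · nlinarith only [hD1, h2k0, h2k1, hD0]
        have h12n : 1/(2*(n:ℝ)) ≤ 25/8*q := by
          rw [div_le_iff₀ (by positivity)]
          nlinarith only [hnq]
        have hξη : ξ ≤ η + 25/8*q := by
          have htri : ξ ≤ η + |p - D/2| := by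
            rw [hxi, hetadef]
            calc |x - p| ≤ |x - D/2| + |D/2 - p| := abs_sub_le x (D/2) p
              _ = |x - D/2| + |p - D/2| := by rw [abs_sub_comm (D/2) p]
          linarith only [htri, hpd, h12n]
        have hη115 : 115*q ≤ η := by linarith only [hξ119, hξη, hq0]
        have h16 : 16*q^2 ≤ η^2/800 := by
          have h1 : (115*q)^2 ≤ η^2 := by
            have := mul_self_le_mul_self (by positivity : (0:ℝ) ≤ 115*q) hη115
            nlinarith only [this]
          nlinarith only [h1]
        have hs14 : 1/4 ≤ s :=
          quarter_bound s t (q^2) hT3 hsum (sq_nonneg q) hq2s.le hs0 ht0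
        have ht14 : 1/4 ≤ t := by
          apply quarter_bound t s (q^2) (by linarith only [hT3, mul_comm s t] : 1/5 < t*s)
            (by linarith only [hsum]) (sq_nonneg q) hq2s.le ht0 hs0
        have hA6 : u*v ≤ (1/4 - η^2)*(1+16*q^2) := by
          have hb2 := prod_bound2 s t q hs14 ht14 hq0.le
          have h1 : u*v ≤ (s*t)*(1+16*q^2) := by
            apply le_of_sq_le_sq' _ _ huv0
              (by positivity)
            calc (u*v)^2 ≤ (s^2+q^2)*(t^2+q^2) := huv2
              _ ≤ ((s*t)*(1+16*q^2))^2 := hb2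
          have h2 : (s*t)*(1+16*q^2) ≤ (1/4 - η^2)*(1+16*q^2) :=
            mul_le_mul_of_nonneg_right hst_id (by positivity)
          linarith only [h1, h2]
        set c : ℝ := 39/10 * η^2 with hc
        have hc0 : 0 ≤ c := by positivity
        have hc1 : c ≤ 1 := by rw [hc]; nlinarith only [hη20]
        have h4A : 4*(u*v) ≤ 1 - c := by
          rw [hc]
          nlinarith only [hA6, h16, mul_nonneg (sq_nonneg η) (sq_nonneg q)]
        have hBern := bern e c hc0 hc1
        have hquad : ξ + q ≤ 75*q*(1 + (e:ℝ)*c) := by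
          have ha : (0:ℝ) < (585/2)*(e:ℝ)*q := by positivity
          have hdisc : 1 ≤ 4*((585/2)*(e:ℝ)*q)*((567/8)*q) := by
            have hd1 : 459*(n:ℝ)*q^2 ≤ 459*(2*(e:ℝ)+3)*q^2 :=
              mul_le_mul_of_nonneg_right (by linarith only [hn2e]) (sq_nonneg q)
            have hd2 : 459*(2*(e:ℝ)+3)*q^2 ≤ (585*567/4)*(e:ℝ)*q^2 :=
              mul_le_mul_of_nonneg_right (by nlinarith only [he1R]) (sq_nonneg q)
            nlinarith only [hqn, hd1, hd2]
          have hsq := sq_nonneg (2*((585/2)*(e:ℝ)*q)*η - 1)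
          have hkey : 0 ≤ (585/2)*(e:ℝ)*q*η^2 - η + (567/8)*q := by
            nlinarith only [hsq, hdisc, ha, sq_nonneg η, hq0, he1R, hη0]
          rw [hc]
          nlinarith only [hkey, hξη, hq0]
        have h4e : (4*(u*v))^e ≤ (1-c)^e :=
          pow_le_pow_left₀ (by positivity) h4A e
        have hc1' : (0:ℝ) ≤ (1-c)^e := pow_nonneg (by linarith only [hc1]) e
        have hfin : (4*(u*v))^e * (ξ + q) ≤ 75*q := by
          have h1 : (4*(u*v))^e * (ξ + q) ≤ (1-c)^e * (75*q*(1 + (e:ℝ)*c)) :=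
            mul_le_mul h4e hquad hξq0 hc1'
          have h2 : (1-c)^e * (75*q*(1 + (e:ℝ)*c)) = 75*q*((1 + (e:ℝ)*c) * (1-c)^e) := by ring
          have h3 : 75*q*((1 + (e:ℝ)*c) * (1-c)^e) ≤ 75*q*1 :=
            mul_le_mul_of_nonneg_left hBern (by positivity)
          linarith only [h1, h2, h3]
        have hexp : (4*(u*v))^e = 4^e * (u*v)^e := mul_pow 4 (u*v) e
        have h41 : (4:ℝ)^e * (1/4:ℝ)^e = 1 := by rw [← mul_pow]; norm_num
        have h4inv : (u*v)^e * (ξ+q) = (4*(u*v))^e * (ξ+q) * (1/4:ℝ)^e := by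
          rw [hexp]
          linear_combination (-((u*v)^e * (ξ+q))) * h41
        rw [h4inv]
        calc (4*(u*v))^e * (ξ+q) * (1/4:ℝ)^e ≤ 75*q * (1/4:ℝ)^e :=
              mul_le_mul_of_nonneg_right hfin (by positivity)
          _ = 75 * q * (1/4:ℝ)^e := by ring

lemma core_scaled (n : ℕ) (d q D x u v : ℝ) (hn : 2 ≤ n) (hd : 0 < d)
    (hq0 : 0 < q) (hqn : d^2 < 459 * n * q^2)
    (hD0 : 0 ≤ D) (hD1 : D ≤ d) (hD2 : d^2 - q^2 ≤ D^2)
    (hu0 : 0 ≤ u) (hv0 : 0 ≤ v) (hu1 : u ≤ d) (hv1 : v ≤ d)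
    (hus : |x| ≤ u) (hvt : |x - D| ≤ v)
    (hu2 : u^2 ≤ x^2 + q^2) (hv2 : v^2 ≤ (x - D)^2 + q^2) :
    (n:ℝ) * u^(n - n/2 - 1) * v^(n/2 - 1) * (|x - ((n - n/2 : ℕ):ℝ) * D / n| + q) * d^2
      ≤ 600 * q * n * max ((d/2)^n) (u^(n - n/2) * v^(n/2)) := by
  have hd' : d ≠ 0 := hd.ne'
  have hn0 : (0:ℝ) < n := by positivity
  set k : ℕ := n - n/2 with hk
  set m : ℕ := n/2 with hm
  have hkm : k + m = n := by omega
  have hk1 : 1 ≤ k := by omega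
  have hm1 : 1 ≤ m := by omega
  have CC := core n (q/d) (D/d) (x/d) (u/d) (v/d) hn
    (by positivity)
    (by
      have h1 : 459*(n:ℝ)*(q/d)^2 = (459*n*q^2)/d^2 := by field_simp
      rw [h1]
      exact (one_lt_div (by positivity)).mpr hqn)
    (by positivity)
    ((div_le_one hd).mpr hD1)
    (by
      have h1 : 1 - (q/d)^2 = (d^2 - q^2)/d^2 := by field_simp
      have h2 : (D/d)^2 = D^2/d^2 := by rw [div_pow]
      rw [h1, h2]
      gcongr)
    (by positivity) (by positivity)
    ((div_le_one hd).mpr hu1) ((div_le_one hd).mpr hv1)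
    (by rw [abs_div, abs_of_pos hd]; gcongr)
    (by
      rw [div_sub_div_same, abs_div, abs_of_pos hd]
      gcongr)
    (by
      have h1 : (u/d)^2 = u^2/d^2 := by rw [div_pow]
      have h2 : (x/d)^2 + (q/d)^2 = (x^2 + q^2)/d^2 := by field_simp
      rw [h1, h2]; gcongr)
    (by
      have h1 : (v/d)^2 = v^2/d^2 := by rw [div_pow]
      have h2 : (x/d - D/d)^2 + (q/d)^2 = ((x-D)^2 + q^2)/d^2 := by
        rw [div_sub_div_same, div_pow, div_pow]
        rw [← add_div]
      rw [h1, h2]; gcongr)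
  -- rewrite the ξ argument
  have hxiarg : |x/d - (k:ℝ) * (D/d) / n| = |x - (k:ℝ)*D/n| / d := by
    have h1 : x/d - (k:ℝ) * (D/d) / n = (x - (k:ℝ)*D/n)/d := by field_simp
    rw [h1, abs_div, abs_of_pos hd]
  rw [hxiarg] at CC
  -- multiply both sides by d^(n+1)
  have hdn : (0:ℝ) < d^(n+1) := by positivity
  have CC2 := mul_le_mul_of_nonneg_right CC hdn.le
  have hmax : max ((1/2:ℝ)^n) ((u/d)^k * (v/d)^m) * d^n = max ((d/2)^n) (u^k * v^m) := by
    rw [max_mul_of_nonneg _ _ (by positivity : (0:ℝ) ≤ d^n)]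
    congr 1
    · rw [← mul_pow]; congr 1; field_simp
    · rw [div_pow, div_pow, ← hkm, pow_add]
      field_simp
  have hL : (n:ℝ) * (u/d)^(k-1) * (v/d)^(m-1) * (|x - (k:ℝ)*D/n|/d + q/d) * d^(n+1)
      = (n:ℝ) * u^(k-1) * v^(m-1) * (|x - (k:ℝ)*D/n| + q) * d^2 := by
    have hdn2 : d^(n+1) = d^(k-1) * d^(m-1) * d^3 := by
      rw [← pow_add, ← pow_add]; congr 1; omega
    rw [div_pow, div_pow, hdn2]
    field_simp
  have hR : 600 * (q/d) * n * max ((1/2:ℝ)^n) ((u/d)^k * (v/d)^m) * d^(n+1)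
      = 600 * q * n * max ((d/2)^n) (u^k * v^m) := by
    rw [← hmax]
    have : d^(n+1) = d^n * d := pow_succ d n
    rw [this]
    field_simp
  rw [hL, hR] at CC2
  exact CC2

lemma polyNorm_nonneg (K : Set ℂ) (P : Polynomial ℂ) : 0 ≤ polyNorm K P := by
  apply Real.sSup_nonneg
  rintro y ⟨z, _, rfl⟩
  exact norm_nonneg _

lemma abs_eval_le_polyNorm {K : Set ℂ} (hK : IsCompact K) (P : Polynomial ℂ)
    {z : ℂ} (hz : z ∈ K) : ‖P.eval z‖ ≤ polyNorm K P := by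
  apply le_csSup
  · exact (hK.image_of_continuousOn
      ((continuous_norm.comp P.continuous).continuousOn)).bddAbove
  · exact ⟨z, hz, rfl⟩

lemma polyNorm_le {K : Set ℂ} (hne : K.Nonempty) {P : Polynomial ℂ} {M : ℝ}
    (h : ∀ z ∈ K, ‖P.eval z‖ ≤ M) : polyNorm K P ≤ M := by
  obtain ⟨z₀, hz₀⟩ := hne
  apply Real.sSup_le
  · rintro y ⟨z, hz, rfl⟩; exact h z hz
  · exact le_trans (norm_nonneg _) (h z₀ hz₀)

set_option maxHeartbeats 1000000 in
lemma exists_diam_pair {K : Set ℂ} (hK : IsCompact K) (hne : K.Nonempty) :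
    ∃ a ∈ K, ∃ b ∈ K, dist a b = Metric.diam K := by
  obtain ⟨z₀, hz₀⟩ := hne
  have hcp : IsCompact (K ×ˢ K) := hK.prod hK
  obtain ⟨p, hp, hmax⟩ := hcp.exists_isMaxOn
    ⟨(z₀, z₀), Set.mk_mem_prod hz₀ hz₀⟩
    ((continuous_fst.dist continuous_snd).continuousOn)
  refine ⟨p.1, hp.1, p.2, hp.2,
    le_antisymm (Metric.dist_le_diam_of_mem hK.isBounded hp.1 hp.2) ?_⟩
  apply Metric.diam_le_of_forall_dist_le dist_nonneg
  intro x hx y hy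
  exact hmax (Set.mk_mem_prod hx hy)

lemma width_dir {K : Set ℂ} (hK : IsCompact K) (hne : K.Nonempty) {W : ℝ}
    (hW : minWidth K < W) :
    ∃ u₀ : ℂ, ‖u₀‖ = 1 ∧
      ∀ z ∈ K, ∀ z' ∈ K,
        ((starRingEnd ℂ) u₀ * z).re - ((starRingEnd ℂ) u₀ * z').re ≤ W := by
  have hSne : { r : ℝ | ∃ u : ℂ, ‖u‖ = 1 ∧
      r = sSup ((fun z => ((starRingEnd ℂ) u * z).re) '' K)
        - sInf ((fun z => ((starRingEnd ℂ) u * z).re) '' K) }.Nonempty := by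
    refine ⟨_, 1, by simp, rfl⟩
  obtain ⟨r, ⟨u₀, hu₀, hr⟩, hrW⟩ := exists_lt_of_csInf_lt hSne hW
  refine ⟨u₀, hu₀, ?_⟩
  intro z hz z' hz'
  have hcont : Continuous fun z : ℂ => ((starRingEnd ℂ) u₀ * z).re :=
    Complex.continuous_re.comp (continuous_const.mul continuous_id)
  have himg : IsCompact ((fun z => ((starRingEnd ℂ) u₀ * z).re) '' K) :=
    hK.image_of_continuousOn hcont.continuousOn
  have h1 : ((starRingEnd ℂ) u₀ * z).re ≤
      sSup ((fun z => ((starRingEnd ℂ) u₀ * z).re) '' K) :=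
    le_csSup himg.bddAbove ⟨z, hz, rfl⟩
  have h2 : sInf ((fun z => ((starRingEnd ℂ) u₀ * z).re) '' K) ≤
      ((starRingEnd ℂ) u₀ * z').re :=
    csInf_le himg.bddBelow ⟨z', hz', rfl⟩
  have := hr ▸ hrW
  linarith

-- coordinate lemma
lemma dist_coord (u₀ : ℂ) (hu₀ : ‖u₀‖ = 1) (z z' : ℂ) :
    (dist z z')^2 = (((starRingEnd ℂ) u₀ * z).im - ((starRingEnd ℂ) u₀ * z').im)^2
      + (((starRingEnd ℂ) u₀ * z).re - ((starRingEnd ℂ) u₀ * z').re)^2 := by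
  have h1 : dist z z' = ‖z - z'‖ := Complex.dist_eq z z'
  have h2 : ‖(starRingEnd ℂ) u₀ * (z - z')‖ = ‖z - z'‖ := by
    rw [norm_mul]
    rw [Complex.norm_conj, hu₀, one_mul]
  rw [h1, ← h2]
  rw [Complex.sq_norm, Complex.normSq_apply, mul_sub]
  simp [Complex.sub_re, Complex.sub_im]
  ring

set_option maxHeartbeats 1000000 in
theorem stmt_4 (K : Set ℂ) (hK : IsCompact K) (hconn : IsConnected K)
    (hd : 0 < Metric.diam K) (hw : 0 < minWidth K) (n : ℕ)
    (hn : (Metric.diam K) ^ 2 / (459 * (minWidth K) ^ 2) < (n : ℝ)) :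
    invMarkov n K ≤ 600 * minWidth K * n / (Metric.diam K) ^ 2 := by
  classical
  have hKne : K.Nonempty := hconn.nonempty
  set d : ℝ := Metric.diam K with hdd
  set w : ℝ := minWidth K with hww
  have hn459 : d^2 < 459 * n * w^2 := by
    have h1 : (0:ℝ) < 459 * w^2 := by positivity
    rw [div_lt_iff₀ h1] at hn
    linarith only [hn]
  have hn1 : 1 ≤ n := by
    rcases Nat.eq_zero_or_pos n with h | h
    · exfalso; rw [h] at hn459; push_cast at hn459; nlinarith only [hn459, sq_nonneg d]
    · exact h
  obtain ⟨a, ha, b, hb, hab⟩ := exists_diam_pair hK hKne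
  set k : ℕ := n - n/2 with hk
  set m : ℕ := n/2 with hm
  have hkm : k + m = n := by omega
  have hk1 : 1 ≤ k := by omega
  set P : Polynomial ℂ := (X - C a)^k * (X - C b)^m with hP
  have hPmonic : P.Monic := ((monic_X_sub_C a).pow k).mul ((monic_X_sub_C b).pow m)
  have hPne : P ≠ 0 := hPmonic.ne_zero
  have hPdeg : P.natDegree = n := by
    rw [hP, Polynomial.Monic.natDegree_mul ((monic_X_sub_C a).pow k)
      ((monic_X_sub_C b).pow m), natDegree_pow, natDegree_pow, natDegree_X_sub_C,
      natDegree_X_sub_C]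
    omega
  have hProots : ∀ z : ℂ, P.IsRoot z → z ∈ K := by
    intro z hz
    rw [hP, IsRoot, eval_mul, eval_pow, eval_pow, eval_sub, eval_sub, eval_X, eval_C,
      eval_C, mul_eq_zero] at hz
    rcases hz with h | h
    · have h2 : z - a = 0 := pow_eq_zero_iff (by omega) |>.mp h
      have : z = a := by linear_combination h2
      rw [this]; exact ha
    · rcases Nat.eq_zero_or_pos m with hm0 | hm0
      · rw [hm0, pow_zero] at h; exact absurd h one_ne_zero
      · have h2 : z - b = 0 := pow_eq_zero_iff (by omega) |>.mp h
        have : z = b := by linear_combination h2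
        rw [this]; exact hb
  set N : ℝ := polyNorm K P with hN
  set N' : ℝ := polyNorm K (Polynomial.derivative P) with hN'
  have hmem : N' / N ∈ { r : ℝ | ∃ Q : Polynomial ℂ, Q ≠ 0 ∧ Q.natDegree = n ∧
      (∀ z : ℂ, Q.IsRoot z → z ∈ K) ∧
      r = polyNorm K (Polynomial.derivative Q) / polyNorm K Q } :=
    ⟨P, hPne, hPdeg, hProots, rfl⟩
  have hbddS : BddBelow { r : ℝ | ∃ Q : Polynomial ℂ, Q ≠ 0 ∧ Q.natDegree = n ∧
      (∀ z : ℂ, Q.IsRoot z → z ∈ K) ∧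
      r = polyNorm K (Polynomial.derivative Q) / polyNorm K Q } := by
    refine ⟨0, ?_⟩
    rintro r ⟨Q, _, _, _, rfl⟩
    exact div_nonneg (polyNorm_nonneg _ _) (polyNorm_nonneg _ _)
  have hstep : invMarkov n K ≤ N' / N := csInf_le hbddS hmem
  refine le_trans hstep ?_
  -- eval formula
  have hevalP : ∀ z : ℂ, ‖P.eval z‖
      = (‖z-a‖)^k * (‖z-b‖)^m := by
    intro z
    rw [hP, eval_mul, eval_pow, eval_pow, eval_sub, eval_sub, eval_X, eval_C, eval_C,
      norm_mul, norm_pow, norm_pow]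
  -- IVT point
  obtain ⟨z₀, hz₀K, hz₀⟩ : ∃ z₀ ∈ K, dist z₀ a = d/2 := by
    have hcont : ContinuousOn (fun z : ℂ => dist z a) K :=
      (continuous_id.dist continuous_const).continuousOn
    have hsub := hconn.isPreconnected.intermediate_value ha hb hcont
    have hmemIcc : d/2 ∈ Set.Icc (dist a a) (dist b a) := by
      rw [dist_self, dist_comm b a, hab]
      constructor <;> [positivity; linarith]
    obtain ⟨z₀, hz₀K, hz₀⟩ := hsub hmemIcc
    exact ⟨z₀, hz₀K, hz₀⟩
  have hz₀b : d/2 ≤ dist z₀ b := by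
    have htri : dist a b ≤ dist a z₀ + dist z₀ b := dist_triangle a z₀ b
    rw [hab, dist_comm a z₀, hz₀] at htri
    linarith
  have hNlow : (d/2)^n ≤ N := by
    have h1 := abs_eval_le_polyNorm hK P hz₀K
    have e1 : ‖z₀ - a‖ = d/2 := by
      rw [← Complex.dist_eq]; exact hz₀
    have e2 : d/2 ≤ ‖z₀ - b‖ := by
      rw [← Complex.dist_eq]; exact hz₀b
    have h2 : (d/2)^n ≤ ‖P.eval z₀‖ := by
      rw [hevalP z₀, e1]
      calc (d/2)^n = (d/2)^k * (d/2)^m := by rw [← pow_add, hkm]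
        _ ≤ (d/2)^k * (‖z₀-b‖)^m := by
            apply mul_le_mul_of_nonneg_left
              (pow_le_pow_left₀ (by positivity) e2 m) (by positivity)
    linarith
  have hNpos : 0 < N := lt_of_lt_of_le (by positivity) hNlow
  rw [div_le_div_iff₀ hNpos (by positivity : (0:ℝ) < d^2)]
  -- goal : N' * d^2 ≤ 600*w*n * N
  rcases eq_or_lt_of_le hn1 with hn1' | hn2
  · -- n = 1
    have hk' : k = 1 := by omega
    have hm' : m = 0 := by omega
    have hder : Polynomial.derivative P = 1 := by
      rw [hP, hk', hm']
      simp
    have hN'le : N' ≤ 1 := by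
      rw [hN', hder]
      apply polyNorm_le hKne
      intro z hz
      simp
    have hnR : (n:ℝ) = 1 := by rw [← hn1']; norm_num
    have hd300 : d ≤ 300*w := by
      have h459 := hn459
      rw [hnR] at h459
      nlinarith only [h459, hw, hd]
    have hN2 : d/2 ≤ N := by
      have := hNlow
      rw [← hn1'] at this
      simpa using this
    rw [hnR]
    nlinarith only [mul_nonneg (by linarith only [hN'le] : (0:ℝ) ≤ 1 - N') (sq_nonneg d),
      mul_nonneg hw.le (by linarith only [hN2] : (0:ℝ) ≤ N - d/2),
      mul_nonneg hd.le (by linarith only [hd300] : (0:ℝ) ≤ 300*w - d)]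
  · -- n ≥ 2
    have hn2' : 2 ≤ n := hn2
    have hm1 : 1 ≤ m := by omega
    have main : ∀ W : ℝ, w < W → N' * d^2 ≤ 600*W*(n:ℝ)*N := by
      intro W hWw
      have hW0 : 0 < W := lt_trans hw hWw
      obtain ⟨u₀, hu₀, hwid0⟩ := width_dir hK hKne hWw
      set xc : ℂ → ℝ := fun z => ((starRingEnd ℂ) u₀ * z).im with hxcdef
      set yc : ℂ → ℝ := fun z => ((starRingEnd ℂ) u₀ * z).re with hycdef
      have hwid : ∀ z ∈ K, ∀ z' ∈ K, |yc z - yc z'| ≤ W := by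
        intro z hz z' hz'
        rw [abs_le]
        constructor
        · have := hwid0 z' hz' z hz; linarith
        · exact hwid0 z hz z' hz'
      have hdc : ∀ z z' : ℂ, (dist z z')^2 = (xc z - xc z')^2 + (yc z - yc z')^2 :=
        fun z z' => dist_coord u₀ hu₀ z z'
      have hnC : (n:ℂ) ≠ 0 := Nat.cast_ne_zero.mpr (by omega)
      have hnR0 : (0:ℝ) < n := by positivity
      set ζ : ℂ := ((k:ℂ)*b + (m:ℂ)*a)/(n:ℂ) with hzeta
      have hζ : (n:ℂ)*ζ = (k:ℂ)*b + (m:ℂ)*a := by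
        rw [hzeta]; field_simp
      have hkmC : (k:ℂ) + (m:ℂ) = (n:ℂ) := by exact_mod_cast congrArg (Nat.cast (R := ℂ)) hkm
      have hkmR : (k:ℝ) + (m:ℝ) = (n:ℝ) := by exact_mod_cast congrArg (Nat.cast (R := ℝ)) hkm
      have hdeval : ∀ z : ℂ, ‖(Polynomial.derivative P).eval z‖
          = n * (‖z-a‖)^(k-1) * (‖z-b‖)^(m-1)
            * ‖z-ζ‖ := by
        intro z
        have hdp : Polynomial.derivative P
            = C (k:ℂ) * (X - C a)^(k-1) * (X - C b)^m
              + (X - C a)^k * (C (m:ℂ) * (X - C b)^(m-1)) := by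
          rw [hP, derivative_mul, derivative_X_sub_C_pow, derivative_X_sub_C_pow]
        rw [hdp]
        have heval : (C (k:ℂ) * (X - C a)^(k-1) * (X - C b)^m
            + (X - C a)^k * (C (m:ℂ) * (X - C b)^(m-1))).eval z
            = (z-a)^(k-1) * (z-b)^(m-1) * ((n:ℂ)*(z-ζ)) := by
          simp only [eval_add, eval_mul, eval_pow, eval_sub, eval_X, eval_C]
          have e1 : (z-a)^k = (z-a)^(k-1)*(z-a) := by
            rw [← pow_succ, Nat.sub_add_cancel hk1]
          have e2 : (z-b)^m = (z-b)^(m-1)*(z-b) := by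
            rw [← pow_succ, Nat.sub_add_cancel hm1]
          have e3 : (n:ℂ)*(z-ζ) = (k:ℂ)*(z-b) + (m:ℂ)*(z-a) := by
            rw [mul_sub, hζ]
            linear_combination (-z)*hkmC
          rw [e1, e2, e3]
          ring
        rw [heval, norm_mul, norm_mul, norm_pow, norm_pow, norm_mul, Complex.norm_natCast]
        ring
      have him : (n:ℝ) * ζ.im = (k:ℝ) * b.im + (m:ℝ) * a.im := by
        have h := congrArg Complex.im hζ
        simpa [Complex.mul_im, Complex.add_im, Complex.natCast_re, Complex.natCast_im]
          using h
      have hre : (n:ℝ) * ζ.re = (k:ℝ) * b.re + (m:ℝ) * a.re := by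
        have h := congrArg Complex.re hζ
        simpa [Complex.mul_re, Complex.add_re, Complex.natCast_re, Complex.natCast_im]
          using h
      have hxc_ex : ∀ t : ℂ, xc t = u₀.re * t.im - u₀.im * t.re := by
        intro t
        simp [hxcdef, Complex.mul_im]
        ring
      have hyc_ex : ∀ t : ℂ, yc t = u₀.re * t.re + u₀.im * t.im := by
        intro t
        simp [hycdef, Complex.mul_re]
      have hxcζ : (n:ℝ) * xc ζ = (k:ℝ) * xc b + (m:ℝ) * xc a := by
        rw [hxc_ex, hxc_ex, hxc_ex]
        linear_combination u₀.re * him - u₀.im * hre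
      have hycζ : (n:ℝ) * yc ζ = (k:ℝ) * yc b + (m:ℝ) * yc a := by
        rw [hyc_ex, hyc_ex, hyc_ex]
        linear_combination u₀.re * hre + u₀.im * him
      have hptwise : ∀ z ∈ K,
          ‖(Polynomial.derivative P).eval z‖ * d^2 ≤ 600*W*(n:ℝ)*N := by
        intro z hz
        set A : ℝ := ‖z - a‖ with hA
        set Bv : ℝ := ‖z - b‖ with hBv
        have hA0 : 0 ≤ A := norm_nonneg _
        have hB0 : 0 ≤ Bv := norm_nonneg _
        have hAdist : A = dist z a := (Complex.dist_eq z a).symm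
        have hBdist : Bv = dist z b := (Complex.dist_eq z b).symm
        have hAd : A ≤ d := by
          rw [hAdist, hdd]; exact Metric.dist_le_diam_of_mem hK.isBounded hz ha
        have hBd : Bv ≤ d := by
          rw [hBdist, hdd]; exact Metric.dist_le_diam_of_mem hK.isBounded hz hb
        have hya : |yc z - yc a| ≤ W := hwid z hz a ha
        have hyb : |yc z - yc b| ≤ W := hwid z hz b hb
        have hyab : |yc a - yc b| ≤ W := hwid a ha b hb
        have hsqA : A^2 = (xc z - xc a)^2 + (yc z - yc a)^2 := by
          rw [hAdist]; exact hdc z a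
        have hsqB : Bv^2 = (xc z - xc b)^2 + (yc z - yc b)^2 := by
          rw [hBdist]; exact hdc z b
        have hsqd : d^2 = (xc a - xc b)^2 + (yc a - yc b)^2 := by
          rw [hdd, ← hab]; exact hdc a b
        obtain ⟨ε, hεabs, hεD⟩ : ∃ ε : ℝ, |ε| = 1 ∧ 0 ≤ ε * (xc b - xc a) := by
          rcases le_total (xc a) (xc b) with h | h
          · exact ⟨1, abs_one, by linarith⟩
          · refine ⟨-1, by norm_num, by linarith only [h]⟩
        have hε2 : ε^2 = 1 := by
          have h := sq_abs ε
          rw [hεabs] at h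
          norm_num at h
          linarith only [h]
        set D : ℝ := ε * (xc b - xc a) with hDdef
        set xx : ℝ := ε * (xc z - xc a) with hxxdef
        have hD2eq : D^2 = (xc b - xc a)^2 := by rw [hDdef, mul_pow, hε2, one_mul]
        have hxx2eq : xx^2 = (xc z - xc a)^2 := by rw [hxxdef, mul_pow, hε2, one_mul]
        have hxxD : xx - D = ε * (xc z - xc b) := by rw [hxxdef, hDdef]; ring
        have hxxD2eq : (xx - D)^2 = (xc z - xc b)^2 := by
          rw [hxxD, mul_pow, hε2, one_mul]
        have habs_xx : |xx| = |xc z - xc a| := by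
          rw [hxxdef, abs_mul, hεabs, one_mul]
        have habs_xxD : |xx - D| = |xc z - xc b| := by
          rw [hxxD, abs_mul, hεabs, one_mul]
        have hya2 : (yc z - yc a)^2 ≤ W^2 := by
          nlinarith only [hya, abs_nonneg (yc z - yc a), sq_abs (yc z - yc a), hW0.le]
        have hyb2 : (yc z - yc b)^2 ≤ W^2 := by
          nlinarith only [hyb, abs_nonneg (yc z - yc b), sq_abs (yc z - yc b), hW0.le]
        have hyab2 : (yc a - yc b)^2 ≤ W^2 := by
          nlinarith only [hyab, abs_nonneg (yc a - yc b), sq_abs (yc a - yc b), hW0.le]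
        have hqn' : d^2 < 459*(n:ℝ)*W^2 := by
          have hwW2 : w^2 ≤ W^2 := by nlinarith only [hWw, hw]
          nlinarith only [hn459, mul_nonneg hnR0.le
            (by linarith only [hwW2] : (0:ℝ) ≤ W^2 - w^2)]
        have hD1' : D ≤ d := by
          apply le_of_sq_le_sq' _ _ hεD hd.le
          rw [hD2eq]
          nlinarith only [hsqd, sq_nonneg (yc a - yc b)]
        have hD2' : d^2 - W^2 ≤ D^2 := by
          rw [hD2eq]
          nlinarith only [hsqd, hyab2]
        have hus' : |xx| ≤ A := by
          rw [habs_xx]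
          apply le_of_sq_le_sq' _ _ (abs_nonneg _) hA0
          rw [sq_abs]
          nlinarith only [hsqA, sq_nonneg (yc z - yc a)]
        have hvt' : |xx - D| ≤ Bv := by
          rw [habs_xxD]
          apply le_of_sq_le_sq' _ _ (abs_nonneg _) hB0
          rw [sq_abs]
          nlinarith only [hsqB, sq_nonneg (yc z - yc b)]
        have hu2' : A^2 ≤ xx^2 + W^2 := by
          rw [hxx2eq]
          nlinarith only [hsqA, hya2]
        have hv2' : Bv^2 ≤ (xx-D)^2 + W^2 := by
          rw [hxxD2eq]
          nlinarith only [hsqB, hyb2]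
        have CS := core_scaled n d W D xx A Bv hn2' hd hW0 hqn' hεD hD1' hD2'
          hA0 hB0 hAd hBd hus' hvt' hu2' hv2'
        have hxieq : xx - (k:ℝ)*D/(n:ℝ) = ε*(xc z - xc ζ) := by
          rw [hxxdef, hDdef]
          field_simp
          linear_combination ε * hxcζ + ε * xc a * hkmR
        have habs_xi : |xx - (k:ℝ)*D/(n:ℝ)| = |xc z - xc ζ| := by
          rw [hxieq, abs_mul, hεabs, one_mul]
        have hyζ2 : |yc z - yc ζ| ≤ W := by
          have hid : (n:ℝ)*(yc z - yc ζ) = (k:ℝ)*(yc z - yc b) + (m:ℝ)*(yc z - yc a) := by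
            linear_combination -hycζ - yc z * hkmR
          have h1 : |(n:ℝ)*(yc z - yc ζ)| ≤ (k:ℝ)*W + (m:ℝ)*W := by
            rw [hid]
            apply le_trans (abs_add_le _ _)
            rw [abs_mul, abs_mul, Nat.abs_cast, Nat.abs_cast]
            gcongr
          rw [abs_mul, Nat.abs_cast] at h1
          have h2 : (k:ℝ)*W + (m:ℝ)*W = (n:ℝ)*W := by linear_combination W * hkmR
          rw [h2] at h1
          exact (mul_le_mul_iff_right₀ hnR0).mp h1
        have hzζd : ‖z - ζ‖ ≤ |xc z - xc ζ| + W := by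
          have h1 : (‖z - ζ‖)^2 = (xc z - xc ζ)^2 + (yc z - yc ζ)^2 := by
            rw [show ‖z - ζ‖ = dist z ζ from (Complex.dist_eq _ _).symm]
            exact hdc z ζ
          apply le_of_sq_le_sq' _ _ (norm_nonneg _) (by positivity)
          rw [h1]
          have h2 : (yc z - yc ζ)^2 ≤ W^2 := by
            nlinarith only [hyζ2, abs_nonneg (yc z - yc ζ), sq_abs (yc z - yc ζ), hW0.le]
          nlinarith only [sq_abs (xc z - xc ζ), h2,
            mul_nonneg (abs_nonneg (xc z - xc ζ)) hW0.le]
        have hmaxN : max ((d/2)^n) (A^k * Bv^m) ≤ N := by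
          apply max_le hNlow
          rw [hN]
          have := abs_eval_le_polyNorm hK P hz
          rw [hevalP z] at this
          exact this
        have hfinal : ‖(Polynomial.derivative P).eval z‖ * d^2
            ≤ 600*W*(n:ℝ)*max ((d/2)^n) (A^k * Bv^m) := by
          rw [hdeval z]
          calc (n:ℝ) * A^(k-1) * Bv^(m-1) * ‖z - ζ‖ * d^2
              ≤ (n:ℝ) * A^(k-1) * Bv^(m-1) * (|xc z - xc ζ| + W) * d^2 := by
                apply mul_le_mul_of_nonneg_right _ (by positivity)
                apply mul_le_mul_of_nonneg_left hzζd (by positivity)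
            _ = (n:ℝ) * A^(k-1) * Bv^(m-1) * (|xx - (k:ℝ)*D/(n:ℝ)| + W) * d^2 := by
                rw [habs_xi]
            _ ≤ 600*W*(n:ℝ)*max ((d/2)^n) (A^k * Bv^m) := CS
        calc ‖(Polynomial.derivative P).eval z‖ * d^2
            ≤ 600*W*(n:ℝ)*max ((d/2)^n) (A^k * Bv^m) := hfinal
          _ ≤ 600*W*(n:ℝ)*N := by
              apply mul_le_mul_of_nonneg_left hmaxN (by positivity)
      have hN'bd : N' ≤ 600*W*(n:ℝ)*N/d^2 := by
        rw [hN']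
        apply polyNorm_le hKne
        intro z hz
        rw [le_div_iff₀ (by positivity : (0:ℝ) < d^2)]
        exact hptwise z hz
      calc N' * d^2 ≤ (600*W*(n:ℝ)*N/d^2) * d^2 := by
            apply mul_le_mul_of_nonneg_right hN'bd (by positivity)
        _ = 600*W*(n:ℝ)*N := by field_simp
    -- limit W → w
    by_contra hcon
    push_neg at hcon
    set W₁ : ℝ := N'*d^2/(600*(n:ℝ)*N) with hW₁
    have h600 : (0:ℝ) < 600*(n:ℝ)*N := by positivity
    have hwW₁ : w < W₁ := by
      rw [hW₁, lt_div_iff₀ h600]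
      linarith only [hcon]
    have hmain := main ((w + W₁)/2) (by linarith)
    have hW₁eq : 600*W₁*(n:ℝ)*N = N'*d^2 := by
      rw [hW₁]
      field_simp
    nlinarith only [hmain, hW₁eq, mul_pos h600 (sub_pos.mpr hwW₁)]
end

section
/- Let K₁ ⊆ ℂ be a connected compact set with 1 ∈ K₁, −1 ∈ K₁, diameter d(K₁) = 2, and minimal width w = w(K₁) < 3/7. For every integer m ≥ 100, the polynomial p_m(z) = (z² − 1)^m satisfies ‖p_m'‖ ≤ √3 · max{w·n, 2·√n} · ‖p_m‖, where n = 2m and ‖f‖ = sup_{z∈K₁} |f(z)|. -/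
open Polynomial

set_option maxHeartbeats 1000000

section Aux


lemma prod2_nonneg (k : ℕ) : 0 ≤ ((k:ℝ))*((k:ℝ)-1) := by
  match k with
  | 0 => norm_num
  | 1 => norm_num
  | (n+2) =>
    have h4 : ((n+2:ℕ):ℝ)*(((n+2:ℕ):ℝ)-1) = ((n:ℝ)+2)*((n:ℝ)+1) := by push_cast; ring
    rw [h4]; positivity

lemma prod3_nonneg (k : ℕ) : 0 ≤ ((k:ℝ))*((k:ℝ)-1)*((k:ℝ)-2) := by
  match k with
  | 0 => norm_num
  | 1 => norm_num
  | 2 => norm_num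
  | (n+3) =>
    have h4 : ((n+3:ℕ):ℝ)*(((n+3:ℕ):ℝ)-1)*(((n+3:ℕ):ℝ)-2)
        = ((n:ℝ)+3)*((n:ℝ)+2)*((n:ℝ)+1) := by push_cast; ring
    rw [h4]; positivity

lemma prod4_nonneg (k : ℕ) : 0 ≤ ((k:ℝ))*((k:ℝ)-1)*((k:ℝ)-2)*((k:ℝ)-3) := by
  match k with
  | 0 => norm_num
  | 1 => norm_num
  | 2 => norm_num
  | 3 => norm_num
  | (n+4) =>
    have h4 : ((n+4:ℕ):ℝ)*(((n+4:ℕ):ℝ)-1)*(((n+4:ℕ):ℝ)-2)*(((n+4:ℕ):ℝ)-3)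
        = ((n:ℝ)+4)*((n:ℝ)+3)*((n:ℝ)+2)*((n:ℝ)+1) := by push_cast; ring
    rw [h4]; positivity

lemma bern4 (x : ℝ) (hx : 0 ≤ x) (k : ℕ) :
    1 + (k:ℝ)*x + (k:ℝ)*((k:ℝ)-1)/2*x^2 + (k:ℝ)*((k:ℝ)-1)*((k:ℝ)-2)/6*x^3
      + (k:ℝ)*((k:ℝ)-1)*((k:ℝ)-2)*((k:ℝ)-3)/24*x^4 ≤ (1+x)^k := by
  induction k with
  | zero => norm_num
  | succ k ih =>
    have h1 : (1+x)^(k+1) = (1+x)^k * (1+x) := by ring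
    have h2 : (1 + (k:ℝ)*x + (k:ℝ)*((k:ℝ)-1)/2*x^2 + (k:ℝ)*((k:ℝ)-1)*((k:ℝ)-2)/6*x^3
      + (k:ℝ)*((k:ℝ)-1)*((k:ℝ)-2)*((k:ℝ)-3)/24*x^4) * (1+x) ≤ (1+x)^k * (1+x) :=
      mul_le_mul_of_nonneg_right ih (by linarith)
    rw [h1]
    push_cast
    nlinarith [h2, mul_nonneg (prod4_nonneg k) (pow_nonneg hx 5)]

/-- the chaining lemma: from `s2 ≤ 1 - d` and the Bernoulli-quartic domination of
`m * (t+u)`, conclude `m * (t+u) * s2 ^ k ≤ 6`. -/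
lemma chain (m k : ℕ) (t u s2 d : ℝ) (htu0 : 0 ≤ t + u)
    (hs2nn : 0 ≤ s2) (hs2 : s2 ≤ 1 - d) (hd0 : 0 ≤ d) (hd1 : d ≤ 1)
    (hD : (m:ℝ) * (t+u) ≤ 6 * (1 + (k:ℝ)*d + (k:ℝ)*((k:ℝ)-1)/2*d^2
      + (k:ℝ)*((k:ℝ)-1)*((k:ℝ)-2)/6*d^3 + (k:ℝ)*((k:ℝ)-1)*((k:ℝ)-2)*((k:ℝ)-3)/24*d^4)) :
    (m:ℝ) * (t+u) * s2^k ≤ 6 := by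
  set D : ℝ := 1 + (k:ℝ)*d + (k:ℝ)*((k:ℝ)-1)/2*d^2
      + (k:ℝ)*((k:ℝ)-1)*((k:ℝ)-2)/6*d^3 + (k:ℝ)*((k:ℝ)-1)*((k:ℝ)-2)*((k:ℝ)-3)/24*d^4
    with hDdef
  have hD1 : (1:ℝ) ≤ D := by
    rw [hDdef]
    have h2 := prod2_nonneg k
    have h3 := prod3_nonneg k
    have h4 := prod4_nonneg k
    have hk0 : (0:ℝ) ≤ (k:ℝ) := Nat.cast_nonneg k
    nlinarith [mul_nonneg h2 (sq_nonneg d), mul_nonneg h3 (pow_nonneg hd0 3),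
      mul_nonneg h4 (pow_nonneg hd0 4), mul_nonneg hk0 hd0]
  have hDpos : (0:ℝ) < D := by linarith
  have hs2k : s2^k ≤ (1-d)^k := pow_le_pow_left₀ hs2nn hs2 k
  have h1d0 : (0:ℝ) ≤ 1 - d := by linarith
  have hmain : (1-d)^k * D ≤ 1 := by
    calc (1-d)^k * D ≤ (1-d)^k * (1+d)^k := by
          apply mul_le_mul_of_nonneg_left _ (pow_nonneg h1d0 k)
          rw [hDdef]; exact bern4 d hd0 k
      _ = ((1-d)*(1+d))^k := (mul_pow _ _ _).symm
      _ = (1-d^2)^k := by ring_nf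
      _ ≤ 1 := pow_le_one₀ (by nlinarith) (by nlinarith)
  calc (m:ℝ) * (t+u) * s2^k ≤ (6*D) * s2^k := by
        apply mul_le_mul_of_nonneg_right _ (pow_nonneg hs2nn k)
        linarith
    _ ≤ (6*D) * (1-d)^k := by
        apply mul_le_mul_of_nonneg_left hs2k (by linarith)
    _ = 6 * ((1-d)^k * D) := by ring
    _ ≤ 6 := by linarith

/-- Case II core: for `t ≥ (365/196) u`, one has `m (t+u) (s²)^(m-1) ≤ 6`. -/
lemma keyC2 (m : ℕ) (hm : 100 ≤ m) (t u s2 : ℝ)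
    (hu0 : 0 ≤ u) (htu : (365/196)*u ≤ t) (ht1 : t ≤ 1) (hu : u ≤ 36/187)
    (hs2 : s2 = (1-t)^2 + 2*u*(1+t) + u^2) (hs2nn : 0 ≤ s2) :
    (m:ℝ) * (t+u) * s2^(m-1) ≤ 6 := by
  have ht0 : 0 ≤ t := le_trans (by linarith) htu
  have htu0 : 0 ≤ t + u := by linarith
  have hu' : u ≤ (196/365)*t := by linarith
  have hmr : (100:ℝ) ≤ (m:ℝ) := by exact_mod_cast hm
  have hk : ((m-1:ℕ):ℝ) = (m:ℝ) - 1 := by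
    have : (1:ℕ) ≤ m := by omega
    push_cast [Nat.cast_sub this]; ring
  set k : ℕ := m - 1 with hkdef
  rcases le_or_gt t (27/100) with hc1 | hc1
  · -- t ∈ [0, 27/100]
    refine chain m k t u s2 (t*(338/365 - (561/365)^2 * t)) htu0 hs2nn ?_ ?_ ?_ ?_
    · nlinarith [mul_nonneg (sub_nonneg.2 hu') hu0, sq_nonneg ((196/365)*t - u),
        mul_nonneg (sub_nonneg.2 hu') (by linarith : (0:ℝ) ≤ 1 + t)]
    · nlinarith
    · nlinarith
    · rw [hk]
      have hext : 0 ≤ ((m:ℝ)-1)*((m:ℝ)-2)/2*(t*(338/365 - (561/365)^2 * t))^2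
          + ((m:ℝ)-1)*((m:ℝ)-2)*((m:ℝ)-3)/6*(t*(338/365 - (561/365)^2 * t))^3
          + ((m:ℝ)-1)*((m:ℝ)-2)*((m:ℝ)-3)*((m:ℝ)-4)/24*(t*(338/365 - (561/365)^2 * t))^4 := by
        have hg0 : 0 ≤ t*(338/365 - (561/365)^2 * t) := by nlinarith
        have p2 : (0:ℝ) ≤ ((m:ℝ)-1)*((m:ℝ)-2) := by nlinarith
        have p3 : (0:ℝ) ≤ ((m:ℝ)-1)*((m:ℝ)-2)*((m:ℝ)-3) := by nlinarith
        have p4 : (0:ℝ) ≤ ((m:ℝ)-1)*((m:ℝ)-2)*((m:ℝ)-3)*((m:ℝ)-4) := by nlinarith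
        positivity
      have hbase : (m:ℝ)*(t+u) ≤ 6*(1+((m:ℝ)-1)*(t*(338/365 - (561/365)^2 * t))) := by
        nlinarith [mul_nonneg (mul_nonneg (sub_nonneg.2 hc1) ht0) (by linarith : (0:ℝ) ≤ (m:ℝ) - 1),
          mul_nonneg ht0 (by linarith : (0:ℝ) ≤ (m:ℝ) - 100),
          mul_nonneg (mul_nonneg ht0 ht0) (by linarith : (0:ℝ) ≤ (m:ℝ) - 1)]
      linarith
  · rcases le_or_gt t (5/14) with hc2 | hc2
    · refine chain m k t u s2 (147/5000) htu0 hs2nn ?_ (by norm_num) (by norm_num) ?_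
      · nlinarith [mul_nonneg (sub_nonneg.2 hc2) (by linarith : (0:ℝ) ≤ t - 27/100),
          mul_nonneg (sub_nonneg.2 hu') (by linarith : (0:ℝ) ≤ 1 + t),
          mul_nonneg (sub_nonneg.2 hu') hu0]
      · rw [hk]
        have h1 : t + u ≤ 561/1022 := by nlinarith
        have h2 : (m:ℝ)*(t+u) ≤ (m:ℝ)*(561/1022) :=
          mul_le_mul_of_nonneg_left h1 (by linarith)
        have h3 : (m:ℝ)*(561/1022) ≤ 6*(1+((m:ℝ)-1)*(147/5000) + ((m:ℝ)-1)*((m:ℝ)-2)/2*(147/5000)^2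
            + ((m:ℝ)-1)*((m:ℝ)-2)*((m:ℝ)-3)/6*(147/5000)^3
            + ((m:ℝ)-1)*((m:ℝ)-2)*((m:ℝ)-3)*((m:ℝ)-4)/24*(147/5000)^4) := by
          nlinarith [sq_nonneg ((m:ℝ)-100), pow_nonneg (by linarith : (0:ℝ) ≤ (m:ℝ) - 100) 3,
            pow_nonneg (by linarith : (0:ℝ) ≤ (m:ℝ) - 100) 4]
        linarith
    · rcases le_or_gt t (21/50) with hc3 | hc3
      · refine chain m k t u s2 (271/10000) htu0 hs2nn ?_ (by norm_num) (by norm_num) ?_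
        · nlinarith [mul_nonneg (sub_nonneg.2 hc3) (by linarith : (0:ℝ) ≤ t - 5/14),
            mul_nonneg (sub_nonneg.2 hu) (by linarith : (0:ℝ) ≤ 1 + t),
            mul_nonneg (sub_nonneg.2 hu) hu0]
        · rw [hk]
          have h1 : t + u ≤ 5727/9350 := by nlinarith
          have h2 : (m:ℝ)*(t+u) ≤ (m:ℝ)*(5727/9350) :=
            mul_le_mul_of_nonneg_left h1 (by linarith)
          have h3 : (m:ℝ)*(5727/9350) ≤ 6*(1+((m:ℝ)-1)*(271/10000) + ((m:ℝ)-1)*((m:ℝ)-2)/2*(271/10000)^2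
              + ((m:ℝ)-1)*((m:ℝ)-2)*((m:ℝ)-3)/6*(271/10000)^3
              + ((m:ℝ)-1)*((m:ℝ)-2)*((m:ℝ)-3)*((m:ℝ)-4)/24*(271/10000)^4) := by
            nlinarith [sq_nonneg ((m:ℝ)-100), pow_nonneg (by linarith : (0:ℝ) ≤ (m:ℝ) - 100) 3,
              pow_nonneg (by linarith : (0:ℝ) ≤ (m:ℝ) - 100) 4]
          linarith
      · rcases le_or_gt t (31/50) with hc4 | hc4
        · refine chain m k t u s2 (399/5000) htu0 hs2nn ?_ (by norm_num) (by norm_num) ?_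
          · nlinarith [mul_nonneg (sub_nonneg.2 hc4) (by linarith : (0:ℝ) ≤ t - 21/50),
              mul_nonneg (sub_nonneg.2 hu) (by linarith : (0:ℝ) ≤ 1 + t),
              mul_nonneg (sub_nonneg.2 hu) hu0]
          · rw [hk]
            have h1 : t + u ≤ 7597/9350 := by nlinarith
            have h2 : (m:ℝ)*(t+u) ≤ (m:ℝ)*(7597/9350) :=
              mul_le_mul_of_nonneg_left h1 (by linarith)
            have h3 : (m:ℝ)*(7597/9350) ≤ 6*(1+((m:ℝ)-1)*(399/5000) + ((m:ℝ)-1)*((m:ℝ)-2)/2*(399/5000)^2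
                + ((m:ℝ)-1)*((m:ℝ)-2)*((m:ℝ)-3)/6*(399/5000)^3
                + ((m:ℝ)-1)*((m:ℝ)-2)*((m:ℝ)-3)*((m:ℝ)-4)/24*(399/5000)^4) := by
              nlinarith [sq_nonneg ((m:ℝ)-100), pow_nonneg (by linarith : (0:ℝ) ≤ (m:ℝ) - 100) 3,
                pow_nonneg (by linarith : (0:ℝ) ≤ (m:ℝ) - 100) 4]
            linarith
        · refine chain m k t u s2 (19/100) htu0 hs2nn ?_ (by norm_num) (by norm_num) ?_
          · nlinarith [mul_nonneg (sub_nonneg.2 ht1) (by linarith : (0:ℝ) ≤ t - 31/50),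
              mul_nonneg (sub_nonneg.2 hu) (by linarith : (0:ℝ) ≤ 1 + t),
              mul_nonneg (sub_nonneg.2 hu) hu0]
          · rw [hk]
            have h1 : t + u ≤ 223/187 := by nlinarith
            have h2 : (m:ℝ)*(t+u) ≤ (m:ℝ)*(223/187) :=
              mul_le_mul_of_nonneg_left h1 (by linarith)
            have h3 : (m:ℝ)*(223/187) ≤ 6*(1+((m:ℝ)-1)*(19/100) + ((m:ℝ)-1)*((m:ℝ)-2)/2*(19/100)^2
                + ((m:ℝ)-1)*((m:ℝ)-2)*((m:ℝ)-3)/6*(19/100)^3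
                + ((m:ℝ)-1)*((m:ℝ)-2)*((m:ℝ)-3)*((m:ℝ)-4)/24*(19/100)^4) := by
              nlinarith [sq_nonneg ((m:ℝ)-100), pow_nonneg (by linarith : (0:ℝ) ≤ (m:ℝ) - 100) 3,
                pow_nonneg (by linarith : (0:ℝ) ≤ (m:ℝ) - 100) 4]
            linarith

lemma keyPoint (m : ℕ) (hm : 100 ≤ m) (v : ℝ) (hv0 : 0 ≤ v) (z : ℂ)
    (hx : z.re^2 ≤ 1) (hyv : (187/196)*z.im^2 ≤ v^2) (hy : z.im^2 ≤ 36/187)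
    (M : ℝ) (hM1 : 1 ≤ M) (hMs : ‖z^2-1‖ ≤ M) :
    2*(m:ℝ)*(‖z‖)*(‖z^2-1‖)^(m-1)
      ≤ Real.sqrt 3 * max (v*(2*(m:ℝ))) (2*Real.sqrt (2*(m:ℝ))) * M^m := by
  set s := ‖z^2-1‖ with hsdef
  set A := ‖z‖ with hAdef
  have hs0 : 0 ≤ s := norm_nonneg _
  have hA0 : 0 ≤ A := norm_nonneg _
  have hA2 : A^2 = z.re^2 + z.im^2 := by
    rw [hAdef, Complex.sq_norm, Complex.normSq_apply]; ring
  have hre : (z^2 - 1).re = z.re^2 - z.im^2 - 1 := by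
    simp [pow_two, Complex.mul_re]
  have him : (z^2 - 1).im = 2*z.re*z.im := by
    simp [pow_two, Complex.mul_im]; ring
  have hs2 : s^2 = (1 - z.re^2)^2 + 2*z.im^2*(1+z.re^2) + (z.im^2)^2 := by
    rw [hsdef, Complex.sq_norm, Complex.normSq_apply, hre, him]; ring
  have hMm : (1:ℝ) ≤ M^m := one_le_pow₀ hM1
  have h3 : (0:ℝ) ≤ Real.sqrt 3 := Real.sqrt_nonneg 3
  have hm0 : (0:ℝ) ≤ (m:ℝ) := Nat.cast_nonneg m
  rcases le_or_gt (z.re^2) ((365/196)*z.im^2) with hc | hc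
  · -- narrow case : |z| ≤ √3 v
    have hsk : s^(m-1) ≤ M^m := by
      rcases le_or_gt s 1 with hs1 | hs1
      · exact le_trans (pow_le_one₀ hs0 hs1) hMm
      · calc s^(m-1) ≤ s^m := pow_le_pow_right₀ hs1.le (Nat.sub_le m 1)
          _ ≤ M^m := pow_le_pow_left₀ hs0 hMs m
    have hAle : A ≤ Real.sqrt 3 * v := by
      have hsq3 : (Real.sqrt 3) ^ 2 = 3 := Real.sq_sqrt (by norm_num)
      have h1 : A^2 ≤ (Real.sqrt 3 * v)^2 := by
        rw [mul_pow, hsq3]; nlinarith [sq_nonneg z.im]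
      calc A = Real.sqrt (A^2) := (Real.sqrt_sq hA0).symm
        _ ≤ Real.sqrt ((Real.sqrt 3 * v)^2) := Real.sqrt_le_sqrt h1
        _ = Real.sqrt 3 * v := Real.sqrt_sq (by positivity)
    calc 2*(m:ℝ)*A*s^(m-1) ≤ 2*(m:ℝ)*(Real.sqrt 3 * v)*s^(m-1) := by
          apply mul_le_mul_of_nonneg_right _ (pow_nonneg hs0 _)
          have : (0:ℝ) ≤ 2*(m:ℝ) := by positivity
          nlinarith
      _ ≤ 2*(m:ℝ)*(Real.sqrt 3 * v)*M^m := by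
          apply mul_le_mul_of_nonneg_left hsk (by positivity)
      _ = Real.sqrt 3 * (v*(2*(m:ℝ))) * M^m := by ring
      _ ≤ Real.sqrt 3 * max (v*(2*(m:ℝ))) (2*Real.sqrt (2*(m:ℝ))) * M^m := by
          apply mul_le_mul_of_nonneg_right _ (by positivity)
          exact mul_le_mul_of_nonneg_left (le_max_left _ _) h3
  · -- wide case : use keyC2
    have hC2 : (m:ℝ) * (z.re^2 + z.im^2) * (s^2)^(m-1) ≤ 6 :=
      keyC2 m hm (z.re^2) (z.im^2) (s^2) (sq_nonneg _) hc.le hx hy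
        (by rw [hs2]) (sq_nonneg s)
    have hX : (m:ℝ)*A*s^(m-1) ≤ Real.sqrt (6*(m:ℝ)) := by
      rw [Real.le_sqrt (by positivity) (by positivity)]
      have hpow : (s^(m-1))^2 = (s^2)^(m-1) := by
        rw [← pow_mul, ← pow_mul, mul_comm]
      have heq : ((m:ℝ)*A*s^(m-1))^2 = (m:ℝ) * ((m:ℝ)*(z.re^2+z.im^2)*(s^2)^(m-1)) := by
        rw [mul_pow, mul_pow, hpow, hA2]; ring
      rw [heq]
      calc (m:ℝ) * ((m:ℝ)*(z.re^2+z.im^2)*(s^2)^(m-1)) ≤ (m:ℝ) * 6 :=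
            mul_le_mul_of_nonneg_left hC2 hm0
        _ = 6*(m:ℝ) := by ring
    have hsplit : Real.sqrt (6*(m:ℝ)) = Real.sqrt 3 * Real.sqrt (2*(m:ℝ)) := by
      rw [show (6:ℝ)*(m:ℝ) = 3*(2*(m:ℝ)) by ring, Real.sqrt_mul (by norm_num : (0:ℝ) ≤ 3)]
    calc 2*(m:ℝ)*A*s^(m-1) = 2*((m:ℝ)*A*s^(m-1)) := by ring
      _ ≤ 2*(Real.sqrt 3 * Real.sqrt (2*(m:ℝ))) := by rw [← hsplit]; linarith
      _ = Real.sqrt 3 * (2*Real.sqrt (2*(m:ℝ))) := by ring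
      _ ≤ Real.sqrt 3 * (2*Real.sqrt (2*(m:ℝ))) * M^m :=
          le_mul_of_one_le_right (by positivity) hMm
      _ ≤ Real.sqrt 3 * max (v*(2*(m:ℝ))) (2*Real.sqrt (2*(m:ℝ))) * M^m := by
          apply mul_le_mul_of_nonneg_right _ (by positivity)
          exact mul_le_mul_of_nonneg_left (le_max_right _ _) h3

lemma widthFacts (K₁ : Set ℂ) (hK : IsCompact K₁) (h1 : (1:ℂ) ∈ K₁) (hm1 : (-1:ℂ) ∈ K₁)
    (hre : ∀ z ∈ K₁, -1 ≤ z.re ∧ z.re ≤ 1) (u : ℂ) (hu : ‖u‖ = 1) :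
    0 ≤ sSup ((fun z => ((starRingEnd ℂ) u * z).re) '' K₁)
        - sInf ((fun z => ((starRingEnd ℂ) u * z).re) '' K₁) ∧
    (sSup ((fun z => ((starRingEnd ℂ) u * z).re) '' K₁)
        - sInf ((fun z => ((starRingEnd ℂ) u * z).re) '' K₁) ≤ 3/7 →
      ∀ z ∈ K₁, (187/196)*z.im^2 ≤ (sSup ((fun z => ((starRingEnd ℂ) u * z).re) '' K₁)
        - sInf ((fun z => ((starRingEnd ℂ) u * z).re) '' K₁))^2 ∧ z.im^2 ≤ 36/187) := by
  set φ : ℂ → ℝ := fun z => ((starRingEnd ℂ) u * z).re with hφdef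
  have hφc : Continuous φ := Complex.continuous_re.comp (continuous_const.mul continuous_id)
  have himg : IsCompact (φ '' K₁) := hK.image hφc
  have hbA : BddAbove (φ '' K₁) := himg.bddAbove
  have hbB : BddBelow (φ '' K₁) := himg.bddBelow
  set S := sSup (φ '' K₁) with hSdef
  set I := sInf (φ '' K₁) with hIdef
  have hles : ∀ z ∈ K₁, φ z ≤ S := fun z hz => le_csSup hbA ⟨z, hz, rfl⟩
  have hgei : ∀ z ∈ K₁, I ≤ φ z := fun z hz => csInf_le hbB ⟨z, hz, rfl⟩
  set a := u.re with hadef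
  set b := u.im with hbdef
  have hφeq : ∀ z : ℂ, φ z = a*z.re + b*z.im := by
    intro z
    simp [hφdef, Complex.mul_re, hadef, hbdef]
  have hφ1 : φ 1 = a := by rw [hφeq]; simp
  have hφm1 : φ (-1) = -a := by rw [hφeq]; simp
  have haS : a ≤ S := hφ1 ▸ hles 1 h1
  have hmaS : -a ≤ S := hφm1 ▸ hles (-1) hm1
  have haI : I ≤ a := hφ1 ▸ hgei 1 h1
  have hmaI : I ≤ -a := hφm1 ▸ hgei (-1) hm1
  have hab1 : a^2 + b^2 = 1 := by
    have h := Complex.sq_norm u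
    rw [hu, Complex.normSq_apply] at h
    nlinarith [h]
  constructor
  · linarith
  · intro hv37 z hz
    obtain ⟨hx2, hx1⟩ := hre z hz
    have hzS : a*z.re + b*z.im ≤ S := (hφeq z) ▸ hles z hz
    have hzI : I ≤ a*z.re + b*z.im := (hφeq z) ▸ hgei z hz
    set x := z.re
    set y := z.im
    have p1 : (0:ℝ) ≤ (a - I)*(1+x) := mul_nonneg (by linarith) (by linarith)
    have p2 : (0:ℝ) ≤ (-a - I)*(1-x) := mul_nonneg (by linarith) (by linarith)
    have p3 : (0:ℝ) ≤ (S - a)*(1-x) := mul_nonneg (by linarith) (by linarith)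
    have p4 : (0:ℝ) ≤ (S + a)*(1+x) := mul_nonneg (by linarith) (by linarith)
    have haxI : I ≤ a*x := by nlinarith
    have haxS : a*x ≤ S := by nlinarith
    have hby1 : b*y ≤ S - I := by linarith
    have hby2 : -(S-I) ≤ b*y := by linarith
    have hbysq : (b*y)^2 ≤ (S-I)^2 := by nlinarith
    have h2a : 2*a ≤ S - I := by linarith
    have h2a' : -(2*a) ≤ S - I := by linarith
    have h4a2 : 4*a^2 ≤ (S-I)^2 := by nlinarith
    have hvnn : 0 ≤ S - I := by linarith
    have hb2 : (187/196:ℝ) ≤ b^2 := by nlinarith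
    have hmain : (187/196)*y^2 ≤ (S-I)^2 := by
      nlinarith [mul_nonneg (sub_nonneg.2 hb2) (sq_nonneg y)]
    refine ⟨hmain, ?_⟩
    nlinarith [hmain]

end Aux

theorem stmt_8 (K₁ : Set ℂ) (hK : IsCompact K₁) (hconn : IsConnected K₁)
    (h1 : (1 : ℂ) ∈ K₁) (hm1 : (-1 : ℂ) ∈ K₁) (hd : Metric.diam K₁ = 2)
    (hw : minWidth K₁ < 3 / 7) (m : ℕ) (hm : 100 ≤ m) :
    polyNorm K₁ (Polynomial.derivative (((X : Polynomial ℂ) ^ 2 - 1) ^ m)) ≤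
      Real.sqrt 3 * max (minWidth K₁ * (2 * m)) (2 * Real.sqrt (2 * m)) *
        polyNorm K₁ (((X : Polynomial ℂ) ^ 2 - 1) ^ m) := by
  -- real part bounds from the diameter
  have hre : ∀ z ∈ K₁, -1 ≤ z.re ∧ z.re ≤ 1 := by
    intro z hz
    have h1d : ‖z - 1‖ ≤ 2 := by
      rw [← Complex.dist_eq, ← hd]
      exact Metric.dist_le_diam_of_mem hK.isBounded hz h1
    have h2d : ‖z - (-1)‖ ≤ 2 := by
      rw [← Complex.dist_eq, ← hd]
      exact Metric.dist_le_diam_of_mem hK.isBounded hz hm1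
    have hr1 := Complex.abs_re_le_norm (z - 1)
    have hr2 := Complex.abs_re_le_norm (z - (-1))
    simp only [Complex.sub_re, Complex.one_re, Complex.neg_re] at hr1 hr2
    rw [abs_le] at hr1 hr2
    constructor <;> [linarith [hr1.1]; linarith [hr2.2]]
  -- the max point of |z²-1| on K₁
  set f : ℂ → ℝ := fun z => ‖z^2 - 1‖ with hfdef
  have hfc : Continuous f := continuous_norm.comp ((continuous_pow 2).sub continuous_const)
  obtain ⟨z₀, hz₀K, hz₀max⟩ := hK.exists_isMaxOn ⟨1, h1⟩ hfc.continuousOn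
  set M := f z₀ with hMdef
  -- M ≥ 1 via the intermediate value theorem
  have hM1 : (1:ℝ) ≤ M := by
    have h0mem : (0:ℝ) ∈ Set.Icc ((-1:ℂ).re) ((1:ℂ).re) := by norm_num
    obtain ⟨z₁, hz₁K, hz₁re⟩ :=
      hconn.isPreconnected.intermediate_value hm1 h1 Complex.continuous_re.continuousOn h0mem
    have hre1 : (z₁^2 - 1).re = z₁.re^2 - z₁.im^2 - 1 := by
      simp [pow_two, Complex.mul_re]
    have habs := Complex.abs_re_le_norm (z₁^2 - 1)
    rw [hre1, hz₁re] at habs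
    have habs' : (1 + z₁.im^2 : ℝ) ≤ ‖z₁^2 - 1‖ := by
      have : |(0:ℝ)^2 - z₁.im^2 - 1| = 1 + z₁.im^2 := by
        rw [abs_of_nonpos (by nlinarith [sq_nonneg z₁.im])]; ring
      rw [this] at habs
      exact habs
    have hle : ‖z₁^2 - 1‖ ≤ ‖z₀^2 - 1‖ := hz₀max hz₁K
    rw [hMdef]
    simp only [hfdef]
    nlinarith [sq_nonneg z₁.im]
  have hMm1 : (1:ℝ) ≤ M^m := one_le_pow₀ hM1
  -- the norm of (X²-1)^m
  have hnormp : polyNorm K₁ (((X : Polynomial ℂ) ^ 2 - 1) ^ m) = M^m := by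
    have hfun : (fun z => ‖((((X : Polynomial ℂ) ^ 2 - 1) ^ m)).eval z‖)
        = fun z => (f z)^m := by
      funext z
      simp [hfdef, map_pow]
    rw [polyNorm, hfun]
    apply IsGreatest.csSup_eq
    constructor
    · exact ⟨z₀, hz₀K, rfl⟩
    · rintro r ⟨z, hz, rfl⟩
      exact pow_le_pow_left₀ (norm_nonneg _) (hz₀max hz) m
  -- evaluate the derivative
  have hevald : ∀ z : ℂ, ‖(Polynomial.derivative
        ((((X : Polynomial ℂ) ^ 2 - 1) ^ m))).eval z‖
      = 2*(m:ℝ)*(‖z‖)*(‖z^2-1‖)^(m-1) := by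
    intro z
    rw [derivative_pow]
    have hd2 : Polynomial.derivative ((X : Polynomial ℂ)^2 - 1) = C 2 * X := by
      rw [derivative_sub, derivative_one, derivative_X_pow]
      simp
    rw [hd2]
    simp only [eval_mul, eval_pow, eval_sub, eval_one, eval_X, eval_C, eval_natCast,
      norm_mul, norm_pow]
    rw [Complex.norm_natCast]
    have : ‖(2:ℂ)‖ = 2 := by norm_num
    rw [this]
    ring
  -- main bound for a given admissible width value v
  have hmain : ∀ v : ℝ, 0 ≤ v → v ≤ 3/7 →
      (∀ z ∈ K₁, (187/196)*z.im^2 ≤ v^2 ∧ z.im^2 ≤ 36/187) →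
      polyNorm K₁ (Polynomial.derivative (((X : Polynomial ℂ) ^ 2 - 1) ^ m)) ≤
        Real.sqrt 3 * max (v * (2 * m)) (2 * Real.sqrt (2 * m)) * M^m := by
    intro v hv0 hv37 hvz
    rw [polyNorm]
    apply csSup_le (Set.Nonempty.image _ ⟨1, h1⟩)
    rintro r ⟨z, hz, rfl⟩
    simp only
    rw [hevald z]
    have hx2 : z.re^2 ≤ 1 := by
      obtain ⟨ha, hb⟩ := hre z hz
      nlinarith
    exact keyPoint m hm v hv0 z hx2 (hvz z hz).1 (hvz z hz).2 M hM1 (hz₀max hz)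
  -- the ε-argument over the width set
  rw [hnormp]
  set W := { r : ℝ | ∃ u : ℂ, ‖u‖ = 1 ∧
    r = sSup ((fun z => ((starRingEnd ℂ) u * z).re) '' K₁)
      - sInf ((fun z => ((starRingEnd ℂ) u * z).re) '' K₁) } with hWdef
  have hWne : W.Nonempty := ⟨_, 1, by simp, rfl⟩
  have hWlb : ∀ r ∈ W, (0:ℝ) ≤ r := by
    rintro r ⟨u, hu, rfl⟩
    exact (widthFacts K₁ hK h1 hm1 hre u hu).1
  have hWbdd : BddBelow W := ⟨0, hWlb⟩
  have hminW : minWidth K₁ = sInf W := rfl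
  have hw0 : 0 ≤ minWidth K₁ := by
    rw [hminW]; exact le_csInf hWne hWlb
  have hMmpos : (0:ℝ) < M^m := lt_of_lt_of_le one_pos hMm1
  apply le_of_forall_pos_le_add
  intro ε hε
  have hD : (0:ℝ) < Real.sqrt 3 * (2*(m:ℝ)) * M^m + 1 := by positivity
  set δ : ℝ := min ((3/7 - minWidth K₁)/2) (ε / (Real.sqrt 3 * (2*(m:ℝ)) * M^m + 1)) with hδdef
  have hδpos : 0 < δ := by
    apply lt_min
    · linarith
    · positivity
  obtain ⟨v, hvW, hvlt⟩ := (csInf_lt_iff hWbdd hWne).1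
    (show sInf W < minWidth K₁ + δ by rw [← hminW]; linarith)
  have hv0 : 0 ≤ v := hWlb v hvW
  have hv37 : v ≤ 3/7 := by
    have : δ ≤ (3/7 - minWidth K₁)/2 := min_le_left _ _
    linarith
  obtain ⟨u, hu, hveq⟩ := hvW
  have hvz := (widthFacts K₁ hK h1 hm1 hre u hu).2 (by rw [← hveq]; exact hv37)
  have hb := hmain v hv0 hv37 (by rw [hveq]; exact hvz)
  refine le_trans hb ?_
  -- compare the two maxima
  have h3 : (0:ℝ) ≤ Real.sqrt 3 := Real.sqrt_nonneg 3
  have hmaxle : max (v * (2 * (m:ℝ))) (2 * Real.sqrt (2 * m))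
      ≤ max (minWidth K₁ * (2 * (m:ℝ))) (2 * Real.sqrt (2 * m)) + δ*(2*(m:ℝ)) := by
    apply max_le
    · calc v * (2*(m:ℝ)) ≤ (minWidth K₁ + δ) * (2*(m:ℝ)) :=
            mul_le_mul_of_nonneg_right hvlt.le (by positivity)
        _ = minWidth K₁ * (2*(m:ℝ)) + δ*(2*(m:ℝ)) := by ring
        _ ≤ max (minWidth K₁ * (2 * (m:ℝ))) (2 * Real.sqrt (2 * m)) + δ*(2*(m:ℝ)) := by
            have := le_max_left (minWidth K₁ * (2 * (m:ℝ))) (2 * Real.sqrt (2 * m))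
            linarith
    · have h1' := le_max_right (minWidth K₁ * (2 * (m:ℝ))) (2 * Real.sqrt (2 * m))
      have : (0:ℝ) ≤ δ*(2*(m:ℝ)) := by positivity
      linarith
  have hδsmall : Real.sqrt 3 * (δ*(2*(m:ℝ))) * M^m ≤ ε := by
    have hδ2 : δ ≤ ε / (Real.sqrt 3 * (2*(m:ℝ)) * M^m + 1) := min_le_right _ _
    have h2 : δ * (Real.sqrt 3 * (2*(m:ℝ)) * M^m + 1) ≤ ε := by
      rw [← le_div_iff₀ hD] at *
      exact hδ2
    nlinarith [hδpos.le]
  calc Real.sqrt 3 * max (v * (2 * (m:ℝ))) (2 * Real.sqrt (2 * m)) * M^m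
      ≤ Real.sqrt 3 * (max (minWidth K₁ * (2 * (m:ℝ))) (2 * Real.sqrt (2 * m)) + δ*(2*(m:ℝ))) * M^m := by
        apply mul_le_mul_of_nonneg_right _ hMmpos.le
        exact mul_le_mul_of_nonneg_left hmaxle h3
    _ = Real.sqrt 3 * max (minWidth K₁ * (2 * (m:ℝ))) (2 * Real.sqrt (2 * m)) * M^m
        + Real.sqrt 3 * (δ*(2*(m:ℝ))) * M^m := by ring
    _ ≤ Real.sqrt 3 * max (minWidth K₁ * (2 * (m:ℝ))) (2 * Real.sqrt (2 * m)) * M^m + ε := by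
        linarith
end

section
/- Let K₁ ⊆ ℂ be a connected compact set with 1 ∈ K₁, −1 ∈ K₁, diameter d(K₁) = 2, and minimal width w = w(K₁) < 3/7. For every integer m ≥ 100, the polynomial P_m(z) = (z − 1)·(z² − 1)^m satisfies ‖P_m'‖ ≤ 7 · max{w·n, 2·√n} · ‖P_m‖, where n = 2m + 1 and ‖f‖ = sup_{z∈K₁} |f(z)|. -/
open Polynomial

set_option maxHeartbeats 1000000

section TuranHelpers

lemma bern_s9 (s : ℝ) (hs0 : 0 ≤ s) (hs1 : s ≤ 1) (k : ℕ) :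
    (1 - s)^k * (1 + k * s) ≤ 1 := by
  have h1 : 1 + (k:ℝ) * s ≤ (1 + s)^k := one_add_mul_le_pow (by linarith) k
  have h2 : (0:ℝ) ≤ (1-s)^k := pow_nonneg (by linarith) k
  calc (1-s)^k * (1 + k*s) ≤ (1-s)^k * (1+s)^k :=
        mul_le_mul_of_nonneg_left h1 h2
    _ = ((1-s)*(1+s))^k := (mul_pow _ _ _).symm
    _ ≤ 1 := pow_le_one₀ (by nlinarith) (by nlinarith)

lemma sqle {a b : ℝ} (ha : 0 ≤ a) (hb : 0 ≤ b) (h : a^2 ≤ b^2) : a ≤ b := by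
  nlinarith

lemma sqle' {a b : ℝ} (ha : 0 ≤ a) (h : a ≤ b) : a^2 ≤ b^2 := by nlinarith

lemma habs1 {x : ℝ} (h : x^2 ≤ 1) : -1 ≤ x ∧ x ≤ 1 :=
  ⟨by nlinarith, by nlinarith⟩

lemma pow_half_le (k : ℕ) : ((1:ℝ)/2)^k * ((k:ℝ)+2) ≤ 2 := by
  have h := bern_s9 (1/2) (by norm_num) (by norm_num) k
  have e : (1 - 1/2 : ℝ) = 1/2 := by norm_num
  rw [e] at h
  linarith

lemma h4n' {p mm n : ℝ} (hp : 0 ≤ p) (h : p*(mm+1) ≤ 2) (hn : n ≤ 2*mm+2) : p*n ≤ 4 := by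
  nlinarith

lemma numA {n x y E : ℝ} (hn201 : 201 ≤ n) (hE0 : 0 ≤ E) (hx : x^2 ≤ 1) (hx1 : x ≤ 1)
    (hy2 : y^2 ≤ 36/187) (hE2 : E^2 = (n*x+1)^2 + n^2*y^2) : E ≤ (151/100) * n := by
  apply sqle hE0 (by linarith)
  have p1 : 0 ≤ n^2*(1-x^2) := mul_nonneg (sq_nonneg n) (by linarith)
  have p2 : 0 ≤ 2*n*(1-x) := mul_nonneg (by linarith) (by linarith)
  have h1 : (n*x+1)^2 ≤ (n+1)^2 := by nlinarith
  have h2 : n^2*y^2 ≤ n^2*(36/187) := mul_le_mul_of_nonneg_left hy2 (sq_nonneg n)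
  have h3 : 201*n ≤ n^2 := by nlinarith
  nlinarith

lemma numA2 {a W M : ℝ} (ha : a ≤ 604/50) (hW : 28 ≤ W) (hM : 1 ≤ M) : a ≤ 7*W*M := by
  nlinarith

lemma hMle {M q : ℝ} (hM : 0 ≤ M) (hq : 1/2 < q) : M ≤ (2*M)*q := by nlinarith

lemma numB {n x y E r w W : ℝ} (hn201 : 201 ≤ n) (hE0 : 0 ≤ E)
    (hE2 : E^2 = (n*x+1)^2 + n^2*y^2) (hcase : x^2 ≤ 6*y^2)
    (hy : y^2 * 187 ≤ 196 * r^2) (hr0 : 0 ≤ r)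
    (hrn : r * n ≤ w * n + 1) (hWwn : w*n ≤ W) (hW28 : 28 ≤ W) : E ≤ (7/2) * W := by
  have hn0 : (0:ℝ) < n := by linarith
  apply sqle hE0 (by linarith)
  have e0 : n^2*x^2 ≤ n^2*(6*y^2) := mul_le_mul_of_nonneg_left hcase (sq_nonneg n)
  have e1 : 2*(n*x) ≤ (1/4)*(n^2*x^2) + 4 := by nlinarith [sq_nonneg (n*x/2 - 2)]
  have e2 : E^2 ≤ (17/2)*(n^2*y^2) + 5 := by nlinarith
  have e3 : (n^2)*(y^2*187) ≤ (n^2)*(196*r^2) := mul_le_mul_of_nonneg_left hy (sq_nonneg n)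
  have e4 : r*n ≤ (29/28)*W := by linarith
  have e5 : (r*n)^2 ≤ ((29/28)*W)^2 := sqle' (mul_nonneg hr0 (le_of_lt hn0)) e4
  have w784 : 784 ≤ W^2 := by nlinarith
  nlinarith

lemma rho2 {x y A B : ℝ} (hx : x^2 ≤ 1) (hy2 : y^2 ≤ 36/187) (hcase : 6*y^2 ≤ x^2)
    (hA2 : A^2 = (x-1)^2 + y^2) (hB2 : B^2 = (x+1)^2 + y^2) :
    (A*B)^2 ≤ 1 - (3/10)*x^2 := by
  have hab : (A*B)^2 = ((x-1)^2+y^2)*((x+1)^2+y^2) := by rw [mul_pow, hA2, hB2]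
  have q1 : x^2*x^2 ≤ x^2*1 := mul_le_mul_of_nonneg_left hx (sq_nonneg x)
  have q2 : y^2*x^2 ≤ y^2*1 := mul_le_mul_of_nonneg_left hx (sq_nonneg y)
  have q3 : y^2*y^2 ≤ y^2*(36/187) := mul_le_mul_of_nonneg_left hy2 (sq_nonneg y)
  nlinarith [sq_nonneg y]

lemma numC {mr n x y E : ℝ} (hm : 100 ≤ mr) (hn : n = 2*mr+1)
    (hE2 : E^2 = (n*x+1)^2 + n^2*y^2) (hcase : 6*y^2 ≤ x^2) :
    4 * E^2 ≤ 196 * n * (1 + (mr-1)*((3/10)*x^2)) := by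
  have hn0 : (0:ℝ) < n := by rw [hn]; linarith
  have e1 : 8*(n*x) ≤ 4*(n*x^2) + 4*n := by nlinarith [sq_nonneg (x-1), sq_nonneg (x+1)]
  have e2 : 4*(n^2*y^2) ≤ (2/3)*(n^2*x^2) := by
    have := mul_le_mul_of_nonneg_left hcase (sq_nonneg n)
    nlinarith
  have e3 : ((14/3)*n + 4)*(n*x^2) ≤ ((294/5)*(mr-1))*(n*x^2) := by
    apply mul_le_mul_of_nonneg_right _ (mul_nonneg (le_of_lt hn0) (sq_nonneg x))
    rw [hn]; linarith
  nlinarith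

lemma numC2 {n W M : ℝ} (h4n : 4*n ≤ W^2) (hM : 1 ≤ M) (hn0 : 0 < n) :
    196 * n ≤ (7*W*M)^2 := by
  have hW2 : 0 ≤ W^2 := by nlinarith
  have h1 : W^2*1 ≤ W^2*M^2 :=
    mul_le_mul_of_nonneg_left (by nlinarith) hW2
  nlinarith

lemma keylemma (m : ℕ) (hm : 100 ≤ m) (n x y w r A B E M W : ℝ)
    (hn : n = 2 * m + 1)
    (hA0 : 0 ≤ A) (hB0 : 0 ≤ B) (hE0 : 0 ≤ E) (hw0 : 0 ≤ w)
    (hA2 : A^2 = (x-1)^2 + y^2) (hB2 : B^2 = (x+1)^2 + y^2)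
    (hE2 : E^2 = (n*x+1)^2 + n^2*y^2)
    (hAle : A ≤ 2) (hBle : B ≤ 2)
    (hx : x^2 ≤ 1)
    (hy : y^2 * 187 ≤ 196 * r^2) (hr0 : 0 ≤ r) (hr37 : r ≤ 3/7)
    (hrn : r * n ≤ w * n + 1)
    (hM1 : 1 ≤ M) (hMz : A * (A*B)^m ≤ M)
    (hW : W = max (w*n) (2*Real.sqrt n)) :
    A * (A*B)^(m-1) * E ≤ 7 * W * M := by
  have hm1' : (1:ℕ) ≤ m := by omega
  have hm1 : (1:ℝ) ≤ (m:ℝ) := by exact_mod_cast hm1'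
  have hm100 : (100:ℝ) ≤ (m:ℝ) := by exact_mod_cast hm
  have hn201 : (201:ℝ) ≤ n := by rw [hn]; linarith
  have hn0 : (0:ℝ) < n := by linarith
  have hsq : Real.sqrt n ≥ 14 := by
    have h1 : Real.sqrt 196 ≤ Real.sqrt n := Real.sqrt_le_sqrt (by linarith)
    have h196 : Real.sqrt 196 = 14 := by
      rw [show (196:ℝ) = 14^2 by norm_num, Real.sqrt_sq (by norm_num)]
    linarith
  have hW28 : 28 ≤ W := by
    rw [hW]; exact le_trans (by linarith) (le_max_right _ _)
  have hWwn : w * n ≤ W := by rw [hW]; exact le_max_left _ _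
  have hW0 : (0:ℝ) ≤ W := by linarith
  have hW2 : 4 * n ≤ W^2 := by
    have h1 : 2 * Real.sqrt n ≤ W := by rw [hW]; exact le_max_right _ _
    have h2 : (2 * Real.sqrt n)^2 ≤ W^2 := sqle' (by positivity) h1
    have h3 : (2 * Real.sqrt n)^2 = 4 * n := by
      rw [mul_pow, Real.sq_sqrt (le_of_lt hn0)]; ring
    linarith
  have hr2 : r^2 ≤ 9/49 := by have h := sqle' hr0 hr37; norm_num at h; exact h
  have hy2 : y^2 ≤ 36/187 := by linarith
  have hx1 : x ≤ 1 := (habs1 hx).2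
  have hrho0 : 0 ≤ A * B := mul_nonneg hA0 hB0
  have hM0 : (0:ℝ) ≤ M := by linarith
  have hmc : ((m-1 : ℕ):ℝ) = (m:ℝ) - 1 := by
    push_cast [Nat.cast_sub hm1']; ring
  rcases le_or_gt (x^2) (6*y^2) with hcase | hcase
  · rcases le_or_gt (A*B) (1/2) with hhalf | hhalf
    · -- Case A : small rho
      have hps : (0:ℝ) ≤ ((1:ℝ)/2)^(m-1) := by positivity
      have hb := pow_half_le (m-1)
      rw [hmc] at hb
      have hpow : (A*B)^(m-1) ≤ ((1:ℝ)/2)^(m-1) := pow_le_pow_left₀ hrho0 hhalf _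
      obtain ⟨p, hpdef⟩ : ∃ p, ((1:ℝ)/2)^(m-1) = p := ⟨_, rfl⟩
      rw [hpdef] at hb hps hpow
      have h4n : p * n ≤ 4 :=
        h4n' (mm := (m:ℝ)) hps (by linarith) (by rw [hn]; linarith)
      have hE : E ≤ (151/100) * n := numA hn201 hE0 hx hx1 hy2 hE2
      have hrho0' : (0:ℝ) ≤ (A*B)^(m-1) := pow_nonneg hrho0 _
      have e1 : A * (A*B)^(m-1) ≤ 2 * p :=
        mul_le_mul hAle hpow hrho0' (by linarith)
      have step : A * (A*B)^(m-1) * E ≤ (2 * p) * ((151/100)*n) :=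
        mul_le_mul e1 hE hE0 (by positivity)
      have h5 : (2 * p) * ((151/100)*n) ≤ 604/50 := by linarith [h4n]
      exact numA2 (le_trans step h5) hW28 hM1
    · -- Case B : x² ≤ 6y², rho > 1/2
      have hAr : A * (A*B)^(m-1) ≤ 2 * M := by
        have hpow : A * (A*B)^(m-1) * (A*B) ≤ M := by
          have he : (A*B)^(m-1) * (A*B) = (A*B)^m := by
            rw [← pow_succ]; congr 1; omega
          calc A * (A*B)^(m-1) * (A*B) = A * ((A*B)^(m-1) * (A*B)) := by ring
            _ = A * (A*B)^m := by rw [he]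
            _ ≤ M := hMz
        have h2M : M ≤ (2*M) * (A*B) := hMle hM0 hhalf
        have := le_trans hpow h2M
        exact le_of_mul_le_mul_right this (by linarith)
      have hE : E ≤ (7/2) * W := numB hn201 hE0 hE2 hcase hy hr0 hrn hWwn hW28
      calc A * (A*B)^(m-1) * E ≤ (2*M) * ((7/2)*W) :=
            mul_le_mul hAr hE hE0 (by linarith)
        _ = 7 * W * M := by ring
  · -- Case C : x² > 6y²
    have hcase' : 6*y^2 ≤ x^2 := le_of_lt hcase
    have hs0 : (0:ℝ) ≤ (3/10)*x^2 := by positivity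
    have hs1 : (3/10)*x^2 ≤ 1 := by linarith
    have hrho2 : (A*B)^2 ≤ 1 - (3/10)*x^2 := rho2 hx hy2 hcase' hA2 hB2
    have hb := bern_s9 ((3/10)*x^2) hs0 hs1 (m-1)
    rw [hmc] at hb
    have hQnn : 0 ≤ ((m:ℝ)-1) * ((3/10)*x^2) := mul_nonneg (by linarith) hs0
    have hQ0 : (0:ℝ) < 1 + ((m:ℝ)-1)*((3/10)*x^2) := by linarith
    have hpowQ : ((A*B)^2)^(m-1) * (1 + ((m:ℝ)-1)*((3/10)*x^2)) ≤ 1 := by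
      have h1 : ((A*B)^2)^(m-1) ≤ (1-(3/10)*x^2)^(m-1) :=
        pow_le_pow_left₀ (sq_nonneg _) hrho2 _
      have h2 := mul_le_mul_of_nonneg_right h1 (le_of_lt hQ0)
      calc ((A*B)^2)^(m-1) * (1 + ((m:ℝ)-1)*((3/10)*x^2))
          ≤ (1-(3/10)*x^2)^(m-1) * (1 + ((m:ℝ)-1)*((3/10)*x^2)) := h2
        _ ≤ 1 := hb
    have hnum : 4 * E^2 ≤ 196 * n * (1 + ((m:ℝ)-1)*((3/10)*x^2)) :=
      numC hm100 hn hE2 hcase'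
    have hX0 : 0 ≤ A * (A*B)^(m-1) * E := by positivity
    have hXsq : (A * (A*B)^(m-1) * E)^2 = A^2 * ((A*B)^2)^(m-1) * E^2 := by
      rw [mul_pow, mul_pow, ← pow_mul, ← pow_mul, Nat.mul_comm]
    have hA4 : A^2 ≤ 4 := by
      have := sqle' hA0 hAle; linarith
    have hXQ : (A * (A*B)^(m-1) * E)^2 * (1 + ((m:ℝ)-1)*((3/10)*x^2)) ≤ 4 * E^2 := by
      have h1 : A^2 * E^2 ≤ 4 * E^2 :=
        mul_le_mul_of_nonneg_right hA4 (sq_nonneg E)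
      have hq : 0 ≤ ((A*B)^2)^(m-1) * (1 + ((m:ℝ)-1)*((3/10)*x^2)) :=
        mul_nonneg (pow_nonneg (sq_nonneg _) _) (le_of_lt hQ0)
      calc (A * (A*B)^(m-1) * E)^2 * (1 + ((m:ℝ)-1)*((3/10)*x^2))
          = (A^2 * E^2) * (((A*B)^2)^(m-1) * (1 + ((m:ℝ)-1)*((3/10)*x^2))) := by
            rw [hXsq]; ring
        _ ≤ (4 * E^2) * 1 := mul_le_mul h1 hpowQ hq (by positivity)
        _ = 4 * E^2 := by ring
    have h196 : 196 * n ≤ (7*W*M)^2 := numC2 hW2 hM1 hn0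
    have hfin : (A * (A*B)^(m-1) * E)^2 * (1 + ((m:ℝ)-1)*((3/10)*x^2))
        ≤ (7*W*M)^2 * (1 + ((m:ℝ)-1)*((3/10)*x^2)) := by
      have h2 := mul_le_mul_of_nonneg_right h196 (le_of_lt hQ0)
      linarith
    have hfin2 : (A * (A*B)^(m-1) * E)^2 ≤ (7*W*M)^2 :=
      le_of_mul_le_mul_right hfin hQ0
    exact sqle hX0 (by positivity) hfin2

-- complex abs helpers
lemma absA (z : ℂ) : (‖z-1‖)^2 = (z.re-1)^2 + z.im^2 := by
  rw [Complex.sq_norm, Complex.normSq_apply]; simp; ring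

lemma absB (z : ℂ) : (‖z+1‖)^2 = (z.re+1)^2 + z.im^2 := by
  rw [Complex.sq_norm, Complex.normSq_apply]; simp; ring

lemma absE (c : ℝ) (z : ℂ) :
    (‖(c:ℂ)*z+1‖)^2 = (c*z.re+1)^2 + c^2*z.im^2 := by
  rw [Complex.sq_norm, Complex.normSq_apply]; simp; ring

lemma xsq {x y : ℝ} (h1 : (x-1)^2+y^2 ≤ 4) (h2 : (x+1)^2+y^2 ≤ 4) : x^2 ≤ 1 := by
  nlinarith [sq_nonneg y]

lemma axbound {a x S I : ℝ} (hx1 : -1 ≤ x) (hx2 : x ≤ 1)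
    (h1 : a ≤ S) (h2 : -a ≤ S) (h3 : I ≤ a) (h4 : I ≤ -a) :
    I ≤ a*x ∧ a*x ≤ S :=
  ⟨by nlinarith, by nlinarith⟩

lemma sqabs {t r : ℝ} (h1 : t ≤ r) (h2 : -t ≤ r) : t^2 ≤ r^2 := by nlinarith

lemma ybound {a b y r : ℝ} (hab : a^2+b^2 = 1) (hby : (b*y)^2 ≤ r^2)
    (ha : a^2 ≤ r^2/4) (hr : r ≤ 3/7) (hr0 : 0 ≤ r) : y^2*187 ≤ 196*r^2 := by
  have h1 : r^2 ≤ 9/49 := by nlinarith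
  have h2 : y^2*(a^2) ≤ y^2*(r^2/4) := mul_le_mul_of_nonneg_left ha (sq_nonneg y)
  have h3 : y^2*(r^2/4) ≤ y^2*(9/196) := by
    apply mul_le_mul_of_nonneg_left _ (sq_nonneg y); linarith
  nlinarith [sq_nonneg (b*y)]


lemma asq {a S I r : ℝ} (h1 : a ≤ S) (h2 : -a ≤ S) (h3 : I ≤ a) (h4 : I ≤ -a)
    (hr : r = S - I) : a^2 ≤ r^2/4 := by nlinarith

end TuranHelpers

theorem stmt_9 (K₁ : Set ℂ) (hK : IsCompact K₁) (hconn : IsConnected K₁)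
    (h1 : (1 : ℂ) ∈ K₁) (hm1 : (-1 : ℂ) ∈ K₁) (hd : Metric.diam K₁ = 2)
    (hw : minWidth K₁ < 3 / 7) (m : ℕ) (hm : 100 ≤ m) :
    polyNorm K₁
        (Polynomial.derivative (((X : Polynomial ℂ) - 1) * ((X : Polynomial ℂ) ^ 2 - 1) ^ m)) ≤
      7 * max (minWidth K₁ * (2 * m + 1)) (2 * Real.sqrt (2 * m + 1)) *
        polyNorm K₁ (((X : Polynomial ℂ) - 1) * ((X : Polynomial ℂ) ^ 2 - 1) ^ m) := by
  have hKne : K₁.Nonempty := hconn.nonempty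
  set P : Polynomial ℂ := (X - 1) * ((X:Polynomial ℂ)^2 - 1)^m with hP
  set nr : ℝ := 2*(m:ℝ)+1 with hnr
  set w : ℝ := minWidth K₁ with hwdef
  set M : ℝ := polyNorm K₁ P with hMdef
  have hnr0 : (0:ℝ) < nr := by rw [hnr]; positivity
  have himg : ∀ Q : Polynomial ℂ, BddAbove ((fun z => ‖Q.eval z‖) '' K₁) :=
    fun Q => ((hK.image (continuous_norm.comp (Q.continuous))).bddAbove)
  -- eval formula for P
  have habs : ∀ z : ℂ, ‖P.eval z‖
      = ‖z-1‖ * (‖z-1‖ * ‖z+1‖)^m := by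
    intro z
    have he : P.eval z = (z-1) * ((z-1)*(z+1))^m := by
      simp only [hP, eval_mul, eval_pow, eval_sub, eval_one, eval_X]
      ring
    rw [he, norm_mul, norm_pow, norm_mul]
  have hMz : ∀ z ∈ K₁,
      ‖z-1‖ * (‖z-1‖ * ‖z+1‖)^m ≤ M := by
    intro z hz
    rw [← habs z, hMdef]
    exact le_csSup (himg P) ⟨z, hz, rfl⟩
  -- M ≥ 1
  obtain ⟨z₀, hz₀K, hz₀re⟩ : ∃ z ∈ K₁, z.re = 0 := by
    have hpc : IsPreconnected (Complex.re '' K₁) :=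
      (hconn.image _ Complex.continuous_re.continuousOn).isPreconnected
    have ha : (-1:ℝ) ∈ Complex.re '' K₁ := ⟨-1, hm1, by simp⟩
    have hb : (1:ℝ) ∈ Complex.re '' K₁ := ⟨1, h1, by simp⟩
    have h0 : (0:ℝ) ∈ Set.Icc (-1:ℝ) 1 := by norm_num
    obtain ⟨z, hz, hre⟩ := hpc.Icc_subset ha hb h0
    exact ⟨z, hz, hre⟩
  have hM1 : 1 ≤ M := by
    have hA1 : 1 ≤ ‖z₀-1‖ := by
      have h := Complex.abs_re_le_norm (z₀-1)
      rw [show (z₀-1).re = -1 by simp [Complex.sub_re, hz₀re]] at h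
      simpa using h
    have hB1 : 1 ≤ ‖z₀+1‖ := by
      have h := Complex.abs_re_le_norm (z₀+1)
      rw [show (z₀+1).re = 1 by simp [Complex.add_re, hz₀re]] at h
      simpa using h
    have hAB1 : (1:ℝ)*1 ≤ ‖z₀-1‖ * ‖z₀+1‖ :=
      mul_le_mul hA1 hB1 (by norm_num) (by linarith)
    have hpow : (1:ℝ) ≤ (‖z₀-1‖ * ‖z₀+1‖)^m :=
      one_le_pow₀ (by linarith)
    have hone : (1:ℝ)*1 ≤ ‖z₀-1‖ * (‖z₀-1‖ * ‖z₀+1‖)^m :=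
      mul_le_mul hA1 hpow (by norm_num) (by linarith)
    have h2 : 1 ≤ ‖P.eval z₀‖ := by rw [habs z₀]; linarith
    refine le_trans h2 ?_
    rw [hMdef]
    exact le_csSup (himg P) ⟨z₀, hz₀K, rfl⟩
  have hM0 : (0:ℝ) ≤ M := by linarith
  -- width setup
  set WS : Set ℝ := { s : ℝ | ∃ u : ℂ, ‖u‖ = 1 ∧
    s = sSup ((fun z => ((starRingEnd ℂ) u * z).re) '' K₁)
      - sInf ((fun z => ((starRingEnd ℂ) u * z).re) '' K₁) } with hWS
  have hWeq : w = sInf WS := by rw [hwdef, hWS]; rfl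
  have hgc : ∀ u : ℂ, Continuous (fun z : ℂ => ((starRingEnd ℂ) u * z).re) :=
    fun u => Complex.continuous_re.comp (continuous_const.mul continuous_id)
  have hbddA : ∀ u : ℂ, BddAbove ((fun z => ((starRingEnd ℂ) u * z).re) '' K₁) :=
    fun u => (hK.image (hgc u)).bddAbove
  have hbddB : ∀ u : ℂ, BddBelow ((fun z => ((starRingEnd ℂ) u * z).re) '' K₁) :=
    fun u => (hK.image (hgc u)).bddBelow
  have hWSne : WS.Nonempty := ⟨_, 1, by simp, rfl⟩
  have hWSlb : ∀ s ∈ WS, (0:ℝ) ≤ s := by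
    rintro s ⟨u, hu, rfl⟩
    have h1' : ((starRingEnd ℂ) u * 1).re ∈ (fun z => ((starRingEnd ℂ) u * z).re) '' K₁ :=
      ⟨1, h1, rfl⟩
    have hi := csInf_le (hbddB u) h1'
    have hs := le_csSup (hbddA u) h1'
    linarith
  have hWSbdd : BddBelow WS := ⟨0, fun s hs => hWSlb s hs⟩
  have hw0 : 0 ≤ w := by rw [hWeq]; exact le_csInf hWSne hWSlb
  have hδ0 : 0 < min ((3/7 - w)/2) (1/nr) := by
    apply lt_min
    · linarith [hw]
    · positivity
  have hlt : sInf WS < w + min ((3/7 - w)/2) (1/nr) := by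
    rw [← hWeq]; linarith
  obtain ⟨r, hrWS, hrlt⟩ := (csInf_lt_iff hWSbdd hWSne).mp hlt
  have hwr : w ≤ r := by rw [hWeq]; exact csInf_le hWSbdd hrWS
  have hr0 : 0 ≤ r := hWSlb r hrWS
  have hr37 : r ≤ 3/7 := by
    have h2 : min ((3/7 - w)/2) (1/nr) ≤ (3/7 - w)/2 := min_le_left _ _
    linarith
  have hrn : r * nr ≤ w * nr + 1 := by
    have h2 : r ≤ w + 1/nr := by
      have h3 : min ((3/7 - w)/2) (1/nr) ≤ 1/nr := min_le_right _ _
      linarith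
    have h3 := mul_le_mul_of_nonneg_right h2 (le_of_lt hnr0)
    rw [add_mul, one_div_mul_cancel (ne_of_gt hnr0)] at h3
    exact h3
  obtain ⟨u, hu, hreq⟩ := hrWS
  have huab : u.re^2 + u.im^2 = 1 := by
    have h := Complex.sq_norm u
    rw [hu, Complex.normSq_apply] at h
    nlinarith
  -- derivative identity
  have hderiv : Polynomial.derivative P
      = ((X : Polynomial ℂ)^2-1)^(m-1) * ((X - 1) * (C (2*(m:ℂ)+1) * X + 1)) := by
    rw [hP]
    obtain ⟨k, hk⟩ : ∃ k, m = k+1 := ⟨m-1, by omega⟩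
    subst hk
    simp only [derivative_mul, derivative_pow, derivative_sub, derivative_one,
      derivative_X, Nat.add_sub_cancel, map_add, map_one, map_mul, map_ofNat,
      Polynomial.C_eq_natCast]
    push_cast
    ring
  -- final bound via csSup_le
  have hgoal : ∀ z ∈ K₁, ‖(Polynomial.derivative P).eval z‖
      ≤ 7 * max (w * nr) (2 * Real.sqrt nr) * M := by
    intro z hz
    have hde : ‖(Polynomial.derivative P).eval z‖
        = (‖z-1‖ * ‖z+1‖)^(m-1)
          * (‖z-1‖ * ‖(2*(m:ℂ)+1)*z+1‖) := by
      have he : (Polynomial.derivative P).eval z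
          = ((z-1)*(z+1))^(m-1) * ((z-1) * ((2*(m:ℂ)+1)*z+1)) := by
        rw [hderiv]
        simp only [eval_mul, eval_pow, eval_sub, eval_add, eval_one, eval_X, eval_C]
        ring
      rw [he, norm_mul, norm_pow, norm_mul, norm_mul]
    have hdA : ‖z-1‖ ≤ 2 := by
      have hd1 : dist z 1 ≤ Metric.diam K₁ := Metric.dist_le_diam_of_mem hK.isBounded hz h1
      rw [hd, Complex.dist_eq] at hd1
      exact hd1
    have hdB : ‖z+1‖ ≤ 2 := by
      have hd1 : dist z (-1) ≤ Metric.diam K₁ :=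
        Metric.dist_le_diam_of_mem hK.isBounded hz hm1
      rw [hd, Complex.dist_eq] at hd1
      simpa [sub_neg_eq_add] using hd1
    have hA2 : (‖z-1‖)^2 = (z.re-1)^2 + z.im^2 := absA z
    have hB2 : (‖z+1‖)^2 = (z.re+1)^2 + z.im^2 := absB z
    have hE2 : (‖(2*(m:ℂ)+1)*z+1‖)^2 = (nr*z.re+1)^2 + nr^2*z.im^2 := by
      have hc : ((nr:ℝ):ℂ) = 2*(m:ℂ)+1 := by rw [hnr]; push_cast; ring
      rw [← hc, absE nr z]
    have hA0 : (0:ℝ) ≤ ‖z-1‖ := norm_nonneg _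
    have hB0 : (0:ℝ) ≤ ‖z+1‖ := norm_nonneg _
    have hE0 : (0:ℝ) ≤ ‖(2*(m:ℂ)+1)*z+1‖ := norm_nonneg _
    have hA4 : (z.re-1)^2+z.im^2 ≤ 4 := by
      have h := sqle' hA0 hdA
      rw [hA2] at h
      linarith
    have hB4 : (z.re+1)^2+z.im^2 ≤ 4 := by
      have h := sqle' hB0 hdB
      rw [hB2] at h
      linarith
    have hxsq : z.re^2 ≤ 1 := xsq hA4 hB4
    have hx1 := habs1 hxsq
    -- width bound for this z
    have hywidth : z.im^2 * 187 ≤ 196 * r^2 := by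
      have hg1 : ((starRingEnd ℂ) u * 1).re = u.re := by simp
      have hgm1 : ((starRingEnd ℂ) u * (-1)).re = -u.re := by simp
      have hgz : ((starRingEnd ℂ) u * z).re = u.re*z.re + u.im*z.im := by
        simp only [Complex.mul_re, Complex.conj_re, Complex.conj_im]
        ring
      have haS : u.re ≤ sSup ((fun z => ((starRingEnd ℂ) u * z).re) '' K₁) := by
        rw [← hg1]; exact le_csSup (hbddA u) ⟨1, h1, rfl⟩
      have hmaS : -u.re ≤ sSup ((fun z => ((starRingEnd ℂ) u * z).re) '' K₁) := by
        rw [← hgm1]; exact le_csSup (hbddA u) ⟨-1, hm1, rfl⟩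
      have hIa : sInf ((fun z => ((starRingEnd ℂ) u * z).re) '' K₁) ≤ u.re := by
        rw [← hg1]; exact csInf_le (hbddB u) ⟨1, h1, rfl⟩
      have hIma : sInf ((fun z => ((starRingEnd ℂ) u * z).re) '' K₁) ≤ -u.re := by
        rw [← hgm1]; exact csInf_le (hbddB u) ⟨-1, hm1, rfl⟩
      have hzS : ((starRingEnd ℂ) u * z).re
          ≤ sSup ((fun z => ((starRingEnd ℂ) u * z).re) '' K₁) :=
        le_csSup (hbddA u) ⟨z, hz, rfl⟩
      have hzI : sInf ((fun z => ((starRingEnd ℂ) u * z).re) '' K₁)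
          ≤ ((starRingEnd ℂ) u * z).re :=
        csInf_le (hbddB u) ⟨z, hz, rfl⟩
      have hax := axbound hx1.1 hx1.2 haS hmaS hIa hIma
      rw [hgz] at hzS hzI
      have hby1 : u.im*z.im ≤ r := by rw [hreq]; linarith [hax.1]
      have hby2 : -(u.im*z.im) ≤ r := by rw [hreq]; linarith [hax.2]
      have hbysq : (u.im*z.im)^2 ≤ r^2 := sqabs hby1 hby2
      have hasq : u.re^2 ≤ r^2/4 := asq haS hmaS hIa hIma hreq
      exact ybound huab hbysq hasq hr37 hr0
    have hkey := keylemma m hm nr z.re z.im w r (‖z-1‖) (‖z+1‖)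
      (‖(2*(m:ℂ)+1)*z+1‖) M (max (w * nr) (2 * Real.sqrt nr))
      (by rw [hnr]) hA0 hB0 hE0 hw0 hA2 hB2 hE2 hdA hdB hxsq hywidth hr0 hr37 hrn
      hM1 (hMz z hz) rfl
    rw [hde]
    calc (‖z-1‖ * ‖z+1‖)^(m-1)
          * (‖z-1‖ * ‖(2*(m:ℂ)+1)*z+1‖)
        = ‖z-1‖ * (‖z-1‖ * ‖z+1‖)^(m-1)
          * ‖(2*(m:ℂ)+1)*z+1‖ := by ring
      _ ≤ 7 * max (w * nr) (2 * Real.sqrt nr) * M := hkey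
  have hfin : polyNorm K₁ (Polynomial.derivative P)
      ≤ 7 * max (w * nr) (2 * Real.sqrt nr) * M := by
    apply csSup_le (hKne.image _)
    rintro v ⟨z, hz, rfl⟩
    exact hgoal z hz
  rw [hnr] at hfin
  exact hfin
end

section
/- Let K₁ ⊆ ℂ be a connected compact set with 1 ∈ K₁ and −1 ∈ K₁. Then for every integer m ≥ 1, sup_{z∈K₁} |z² − 1|^m ≥ 1, i.e. the polynomial p_m(z) = (z² − 1)^m satisfies ‖p_m‖ ≥ 1, where ‖f‖ = sup_{z∈K₁} |f(z)|. -/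
open Polynomial

set_option maxHeartbeats 1000000 in
theorem stmt_11 (K₁ : Set ℂ) (hK : IsCompact K₁) (hconn : IsConnected K₁)
    (h1 : (1 : ℂ) ∈ K₁) (hm1 : (-1 : ℂ) ∈ K₁) (m : ℕ) (hm : 1 ≤ m) :
    1 ≤ polyNorm K₁ (((X : Polynomial ℂ) ^ 2 - 1) ^ m) := by
  -- the image of K₁ under Re is connected and contains ±1, so contains 0
  have himg : IsConnected (Complex.re '' K₁) :=
    hconn.image Complex.re Complex.continuous_re.continuousOn
  have h0 : (0 : ℝ) ∈ Complex.re '' K₁ := by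
    have := himg.isPreconnected.Icc_subset (a := (-1 : ℝ)) (b := 1)
      ⟨-1, hm1, by simp⟩ ⟨1, h1, by simp⟩
    exact this ⟨by norm_num, by norm_num⟩
  obtain ⟨z, hzK, hzre⟩ := h0
  -- |z^2 - 1| ≥ 1
  have habs : (1 : ℝ) ≤ ‖z ^ 2 - 1‖ := by
    have hre : (z ^ 2 - 1).re = -(z.im ^ 2) - 1 := by
      simp [pow_two, Complex.sub_re, Complex.mul_re, hzre]
    calc (1 : ℝ) ≤ |(z ^ 2 - 1).re| := by
          rw [hre]; rw [abs_of_nonpos (by nlinarith [sq_nonneg z.im])]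
          nlinarith [sq_nonneg z.im]
      _ ≤ ‖z ^ 2 - 1‖ := Complex.abs_re_le_norm _
  have hval : (1 : ℝ) ≤ ‖(((((X : Polynomial ℂ) ^ 2 - 1) ^ m)).eval z)‖ := by
    simp only [eval_pow, eval_sub, eval_one, eval_X, norm_pow]
    exact one_le_pow₀ habs
  -- the sup is bounded above since K₁ compact
  have hbdd : BddAbove ((fun w => ‖((((X : Polynomial ℂ) ^ 2 - 1) ^ m).eval w)‖) '' K₁) := by
    apply IsCompact.bddAbove
    apply hK.image
    exact continuous_norm.comp (Polynomial.continuous _)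
  unfold polyNorm
  exact le_trans hval (le_csSup hbdd ⟨z, hzK, rfl⟩)
end

section
/- Let K₁ ⊆ ℂ be a connected compact set with 1 ∈ K₁ and −1 ∈ K₁, and let m ≥ 1 be an integer. Then the polynomial p_m(z) = (z² − 1)^m satisfies, for every z ∈ K₁, |p_m'(z)| ≤ 2m·|z|·‖p_m‖, where ‖f‖ = sup_{z∈K₁} |f(z)|. -/
open Polynomial

theorem stmt_12 (K₁ : Set ℂ) (hK : IsCompact K₁) (hconn : IsConnected K₁)
    (h1 : (1 : ℂ) ∈ K₁) (hm1 : (-1 : ℂ) ∈ K₁) (m : ℕ) (hm : 1 ≤ m) :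
    ∀ z ∈ K₁,
      ‖(Polynomial.derivative (((X : Polynomial ℂ) ^ 2 - 1) ^ m)).eval z‖ ≤
        2 * m * ‖z‖ * polyNorm K₁ (((X : Polynomial ℂ) ^ 2 - 1) ^ m) := by
  intro z hz
  set P : Polynomial ℂ := ((X : Polynomial ℂ) ^ 2 - 1) ^ m with hP
  set M : ℝ := polyNorm K₁ P with hM
  have hcont : ContinuousOn (fun w => ‖P.eval w‖) K₁ :=
    (continuous_norm.comp P.continuous_aeval).continuousOn
  have hbdd : BddAbove ((fun w => ‖P.eval w‖) '' K₁) :=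
    (hK.image_of_continuousOn hcont).bddAbove
  have hle : ∀ w ∈ K₁, ‖w ^ 2 - 1‖ ^ m ≤ M := by
    intro w hw
    have e : ‖w ^ 2 - 1‖ ^ m = ‖P.eval w‖ := by simp [hP]
    rw [e]
    exact le_csSup hbdd ⟨w, hw, rfl⟩
  obtain ⟨z₀, hz₀K, hz₀⟩ : ∃ z₀ ∈ K₁, Complex.re z₀ = 0 := by
    have h := hconn.isPreconnected.intermediate_value (a := (-1 : ℂ)) (b := (1 : ℂ))
      hm1 h1 (f := Complex.re) Complex.continuous_re.continuousOn
    have h0 : (0 : ℝ) ∈ Set.Icc (Complex.re (-1)) (Complex.re 1) := by simp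
    obtain ⟨z₀, hz₀K, hz₀⟩ := h h0
    exact ⟨z₀, hz₀K, hz₀⟩
  have habs0 : (1 : ℝ) ≤ ‖z₀ ^ 2 - 1‖ := by
    have hre : (z₀ ^ 2 - 1).re = -(z₀.im ^ 2 + 1) := by
      simp [pow_two, Complex.mul_re, Complex.sub_re, hz₀]; ring
    calc (1 : ℝ) ≤ |(z₀ ^ 2 - 1).re| := by
          rw [hre, abs_neg, abs_of_nonneg (by positivity)]; nlinarith [sq_nonneg z₀.im]
      _ ≤ ‖z₀ ^ 2 - 1‖ := Complex.abs_re_le_norm _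
  have hM1 : (1 : ℝ) ≤ M := by
    have : (1:ℝ) ≤ ‖z₀ ^ 2 - 1‖ ^ m := by
      calc (1:ℝ) = 1 ^ m := (one_pow m).symm
        _ ≤ _ := pow_le_pow_left₀ zero_le_one habs0 m
    exact le_trans this (hle z₀ hz₀K)
  have hkey : ‖z ^ 2 - 1‖ ^ (m - 1) ≤ M := by
    rcases le_or_gt (‖z ^ 2 - 1‖) 1 with h | h
    · exact le_trans (pow_le_one₀ (norm_nonneg _) h) hM1
    · exact le_trans (pow_le_pow_right₀ h.le (Nat.sub_le m 1)) (hle z hz)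
  have hderiv : Polynomial.derivative P =
      C (m : ℂ) * ((X : Polynomial ℂ) ^ 2 - 1) ^ (m - 1) * (2 * X) := by
    rw [hP, derivative_pow]
    congr 1
    simp [derivative_sub, derivative_X_pow, map_ofNat]; norm_num
  rw [hderiv]
  simp only [eval_mul, eval_C, eval_pow, eval_sub, eval_ofNat, eval_X, eval_one, norm_mul,
    norm_pow, Complex.norm_natCast, Complex.norm_ofNat]
  have h2 : (0:ℝ) ≤ 2 * m * ‖z‖ := by positivity
  calc (m : ℝ) * ‖z ^ 2 - 1‖ ^ (m - 1) * (2 * ‖z‖)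
      = 2 * m * ‖z‖ * ‖z ^ 2 - 1‖ ^ (m - 1) := by ring
    _ ≤ 2 * m * ‖z‖ * M := by
        exact mul_le_mul_of_nonneg_left hkey h2
end

section
/- Let K₁ ⊆ ℂ be a connected compact set with 1 ∈ K₁, −1 ∈ K₁, and diameter d(K₁) = 2, and let m ≥ 1 be an integer. Then the polynomials p_m(z) = (z² − 1)^m and P_m(z) = (z − 1)·(z² − 1)^m satisfy ‖p_m‖ ≤ 2·‖P_m‖, where ‖f‖ = sup_{z∈K₁} |f(z)|. -/
open Polynomial

theorem stmt_13 (K₁ : Set ℂ) (hK : IsCompact K₁) (hconn : IsConnected K₁)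
    (h1 : (1 : ℂ) ∈ K₁) (hm1 : (-1 : ℂ) ∈ K₁) (hd : Metric.diam K₁ = 2)
    (m : ℕ) (hm : 1 ≤ m) :
    polyNorm K₁ (((X : Polynomial ℂ) ^ 2 - 1) ^ m) ≤
      2 * polyNorm K₁ (((X : Polynomial ℂ) - 1) * ((X : Polynomial ℂ) ^ 2 - 1) ^ m) := by
  have hne : K₁.Nonempty := ⟨1, h1⟩
  set P : Polynomial ℂ := ((X : Polynomial ℂ) - 1) * ((X : Polynomial ℂ) ^ 2 - 1) ^ m with hPdef
  -- evaluation formulas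
  have hevalp : ∀ z : ℂ, ‖(((X : Polynomial ℂ) ^ 2 - 1) ^ m).eval z‖
      = (‖z - 1‖ * ‖z + 1‖) ^ m := by
    intro z
    have : (z ^ 2 - 1) = (z - 1) * (z + 1) := by ring
    simp [this, norm_mul, norm_pow, mul_pow]
  have hevalP : ∀ z : ℂ, ‖P.eval z‖
      = ‖z - 1‖ * (‖z - 1‖ * ‖z + 1‖) ^ m := by
    intro z
    have : (z ^ 2 - 1) = (z - 1) * (z + 1) := by ring
    simp [hPdef, this, norm_mul, norm_pow, mul_pow]
  -- distance bounds
  have habs1 : ∀ z ∈ K₁, ‖z - 1‖ ≤ 2 := by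
    intro z hz
    have := Metric.dist_le_diam_of_mem hK.isBounded hz h1
    rw [hd] at this
    simpa [Complex.dist_eq] using this
  have habs2 : ∀ z ∈ K₁, ‖z + 1‖ ≤ 2 := by
    intro z hz
    have := Metric.dist_le_diam_of_mem hK.isBounded hz hm1
    rw [hd] at this
    simpa [Complex.dist_eq, sub_neg_eq_add] using this
  -- a point w ∈ K₁ with |w - 1| = 1
  obtain ⟨w, hwK, hw⟩ : ∃ w ∈ K₁, ‖w - 1‖ = 1 := by
    have hcont : ContinuousOn (fun z : ℂ => ‖z - 1‖) K₁ :=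
      (continuous_norm.comp (continuous_id.sub continuous_const)).continuousOn
    have key := hconn.isPreconnected.intermediate_value h1 hm1 hcont
    have h1' : (1 : ℝ) ∈ Set.Icc (‖(1 : ℂ) - 1‖) (‖(-1 : ℂ) - 1‖) := by
      norm_num
    obtain ⟨w, hwK, hw⟩ := key h1'
    exact ⟨w, hwK, hw⟩
  have hw2 : (1 : ℝ) ≤ ‖w + 1‖ := by
    have he : w + 1 = 2 - (1 - w) := by ring
    have h1w : ‖1 - w‖ = 1 := by rw [← hw]; exact norm_sub_rev 1 w
    calc (1 : ℝ) = ‖(2 : ℂ)‖ - ‖1 - w‖ := by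
          rw [h1w]; norm_num
      _ ≤ ‖2 - (1 - w)‖ := by
          exact norm_sub_norm_le (2 : ℂ) (1 - w)
      _ = ‖w + 1‖ := by rw [← he]
  -- bddAbove of the P-image
  have hbddP : BddAbove ((fun z => ‖P.eval z‖) '' K₁) := by
    have hc : ContinuousOn (fun z => ‖P.eval z‖) K₁ :=
      (continuous_norm.comp (P.continuous)).continuousOn
    exact (hK.image_of_continuousOn hc).bddAbove
  -- lower bound on polyNorm K₁ P
  have hPval : (1 : ℝ) ≤ ‖P.eval w‖ := by
    rw [hevalP, hw]
    have h1m : (1 : ℝ) = 1 ^ m := (one_pow m).symm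
    have : (1 : ℝ) ^ m ≤ (1 * ‖w + 1‖) ^ m :=
      pow_le_pow_left₀ (by norm_num) (by simpa using hw2) m
    nlinarith [this]
  have hPnorm : (1 : ℝ) ≤ polyNorm K₁ P :=
    le_trans hPval (le_csSup hbddP ⟨w, hwK, rfl⟩)
  -- main bound
  rw [polyNorm]
  apply Real.sSup_le
  · rintro r ⟨z, hz, rfl⟩
    dsimp only
    rw [hevalp]
    have hnn1 : (0 : ℝ) ≤ ‖z - 1‖ := norm_nonneg _
    have hnn2 : (0 : ℝ) ≤ ‖z + 1‖ := norm_nonneg _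
    by_cases hcase : (1 / 2 : ℝ) ≤ ‖z - 1‖
    · have hle : (‖z - 1‖ * ‖z + 1‖) ^ m
          ≤ 2 * ‖P.eval z‖ := by
        rw [hevalP]
        nlinarith [pow_nonneg (mul_nonneg hnn1 hnn2) m]
      have hle2 : ‖P.eval z‖ ≤ polyNorm K₁ P :=
        le_csSup hbddP ⟨z, hz, rfl⟩
      linarith
    · push_neg at hcase
      have hmul : ‖z - 1‖ * ‖z + 1‖ ≤ 1 := by
        nlinarith [habs2 z hz]
      have hpow : (‖z - 1‖ * ‖z + 1‖) ^ m ≤ 1 :=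
        pow_le_one₀ (mul_nonneg hnn1 hnn2) hmul
      linarith
  · positivity
end

section
/- Let K₁ ⊆ ℂ be a connected compact set with 1 ∈ K₁, −1 ∈ K₁, and diameter d(K₁) = 2, let m ≥ 1 be an integer, and suppose the norm ‖p_m‖ of p_m(z) = (z² − 1)^m is attained at z₀ ∈ K₁ (i.e. ‖p_m‖ = |p_m(z₀)|). Then |z₀ − 1| ≥ 1/2, where ‖f‖ = sup_{z∈K₁} |f(z)|. -/
open Polynomial

theorem stmt_14 (K₁ : Set ℂ) (hK : IsCompact K₁) (hconn : IsConnected K₁)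
    (h1 : (1 : ℂ) ∈ K₁) (hm1 : (-1 : ℂ) ∈ K₁) (hd : Metric.diam K₁ = 2)
    (m : ℕ) (hm : 1 ≤ m) (z₀ : ℂ) (hz₀ : z₀ ∈ K₁)
    (hmax : polyNorm K₁ (((X : Polynomial ℂ) ^ 2 - 1) ^ m) =
      ‖(((((X : Polynomial ℂ) ^ 2 - 1) ^ m)).eval z₀)‖) :
    1 / 2 ≤ ‖z₀ - 1‖ := by
  unfold polyNorm at hmax
  have heval : ∀ z : ℂ, ‖(((X : Polynomial ℂ) ^ 2 - 1) ^ m).eval z‖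
      = (‖z - 1‖ * ‖z + 1‖) ^ m := by
    intro z
    have h : (z ^ 2 - 1) = (z - 1) * (z + 1) := by ring
    simp [h, map_pow, map_mul]
  have hcont : ContinuousOn (fun z : ℂ => ‖z - 1‖) K₁ :=
    (continuous_norm.comp (continuous_id.sub continuous_const)).continuousOn
  have hiv := hconn.isPreconnected.intermediate_value h1 hm1 hcont
  have h1mem : (1 : ℝ) ∈ Set.Icc ((fun z : ℂ => ‖z - 1‖) 1)
      ((fun z : ℂ => ‖z - 1‖) (-1)) := by
    simp only [sub_self, norm_zero]
    rw [show ((-1 : ℂ) - 1) = -2 by ring]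
    constructor <;> simp <;> norm_num
  obtain ⟨z, hzK, hz1⟩ := hiv h1mem
  simp only at hz1
  have hz2 : (1:ℝ) ≤ ‖z + 1‖ := by
    have htri : ‖(z + 1) + (1 - z)‖ ≤ ‖z + 1‖ + ‖1 - z‖ :=
      norm_add_le _ _
    rw [show (z + 1) + (1 - z) = 2 by ring, norm_sub_rev 1 z, hz1] at htri
    have h2 : ‖(2:ℂ)‖ = 2 := by norm_num
    linarith [h2 ▸ htri]
  have hbdd : BddAbove ((fun z => ‖(((X : Polynomial ℂ) ^ 2 - 1) ^ m).eval z‖) '' K₁) := by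
    apply IsCompact.bddAbove
    apply hK.image_of_continuousOn
    exact (continuous_norm.comp (Polynomial.continuous _)).continuousOn
  have hle : ‖(((X : Polynomial ℂ) ^ 2 - 1) ^ m).eval z‖
      ≤ sSup ((fun z => ‖(((X : Polynomial ℂ) ^ 2 - 1) ^ m).eval z‖) '' K₁) :=
    le_csSup hbdd ⟨z, hzK, rfl⟩
  have hge1 : (1:ℝ) ≤ (‖z₀ - 1‖ * ‖z₀ + 1‖) ^ m := by
    rw [← heval, ← hmax]
    refine le_trans ?_ hle
    rw [heval z, hz1, one_mul]
    calc (1:ℝ) = 1 ^ m := (one_pow m).symm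
    _ ≤ ‖z + 1‖ ^ m := pow_le_pow_left₀ zero_le_one hz2 m
  have hdiam : ‖z₀ + 1‖ ≤ 2 := by
    have := Metric.dist_le_diam_of_mem hK.isBounded hz₀ hm1
    rw [hd, Complex.dist_eq] at this
    rwa [show z₀ - (-1) = z₀ + 1 by ring] at this
  by_contra hlt
  push_neg at hlt
  have habs : (0:ℝ) ≤ ‖z₀ - 1‖ := norm_nonneg _
  have hprod : ‖z₀ - 1‖ * ‖z₀ + 1‖ < 1 := by
    calc ‖z₀ - 1‖ * ‖z₀ + 1‖ ≤ ‖z₀ - 1‖ * 2 :=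
          mul_le_mul_of_nonneg_left hdiam habs
    _ < 1 := by linarith
  have : (‖z₀ - 1‖ * ‖z₀ + 1‖) ^ m < 1 :=
    pow_lt_one₀ (by positivity) hprod (by omega)
  linarith
end

section
/- Let w be a real number with 0 ≤ w < 3/7, let m ≥ 100 be an integer, and define h(t) = (1 + w² − t)² + 4·w²·t and g(t) = (t + w²)·(h(t))^{m−1}. Then for every real t with 1 − w ≤ t ≤ 1, one has g(t) ≤ 3·w². -/
theorem stmt_17 (w : ℝ) (hw0 : 0 ≤ w) (hw : w < 3 / 7) (m : ℕ) (hm : 100 ≤ m)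
    (t : ℝ) (ht1 : 1 - w ≤ t) (ht2 : t ≤ 1) :
    (t + w ^ 2) * ((1 + w ^ 2 - t) ^ 2 + 4 * w ^ 2 * t) ^ (m - 1) ≤ 3 * w ^ 2 := by
  have hw2 : w ^ 2 ≤ 9 / 49 := by nlinarith
  have htpos : (0:ℝ) < t := by linarith
  have hH0 : 0 ≤ (1 + w ^ 2 - t) ^ 2 + 4 * w ^ 2 * t := by
    nlinarith [sq_nonneg (1 + w ^ 2 - t), mul_nonneg (sq_nonneg w) htpos.le]
  have h5 : (1 + w ^ 2 - t) ^ 2 + 4 * w ^ 2 * t ≤ 5 * w ^ 2 := by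
    nlinarith [mul_nonneg (show (0:ℝ) ≤ w - 1 + t + w ^ 2 by nlinarith)
      (show (0:ℝ) ≤ w + 1 - t - w ^ 2 by nlinarith)]
  have h1 : (1 + w ^ 2 - t) ^ 2 + 4 * w ^ 2 * t ≤ 45 / 49 := by nlinarith
  have hle1 : (1 + w ^ 2 - t) ^ 2 + 4 * w ^ 2 * t ≤ 1 := by linarith
  have hm9 : 9 ≤ m - 1 := by omega
  have hpow : ((1 + w ^ 2 - t) ^ 2 + 4 * w ^ 2 * t) ^ (m - 1)
      ≤ ((1 + w ^ 2 - t) ^ 2 + 4 * w ^ 2 * t) ^ 9 :=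
    pow_le_pow_of_le_one hH0 hle1 hm9
  have hpow8 : ((1 + w ^ 2 - t) ^ 2 + 4 * w ^ 2 * t) ^ 8 ≤ (45 / 49 : ℝ) ^ 8 :=
    pow_le_pow_left₀ hH0 h1 8
  have htw : t + w ^ 2 ≤ 58 / 49 := by linarith
  have htw0 : 0 ≤ t + w ^ 2 := by positivity
  calc (t + w ^ 2) * ((1 + w ^ 2 - t) ^ 2 + 4 * w ^ 2 * t) ^ (m - 1)
      ≤ (58 / 49) * ((1 + w ^ 2 - t) ^ 2 + 4 * w ^ 2 * t) ^ 9 :=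
        mul_le_mul htw hpow (pow_nonneg hH0 _) (by norm_num)
    _ = (58 / 49) * (((1 + w ^ 2 - t) ^ 2 + 4 * w ^ 2 * t)
          * ((1 + w ^ 2 - t) ^ 2 + 4 * w ^ 2 * t) ^ 8) := by ring
    _ ≤ (58 / 49) * ((5 * w ^ 2) * (45 / 49 : ℝ) ^ 8) := by
        have : ((1 + w ^ 2 - t) ^ 2 + 4 * w ^ 2 * t)
            * ((1 + w ^ 2 - t) ^ 2 + 4 * w ^ 2 * t) ^ 8
            ≤ (5 * w ^ 2) * (45 / 49 : ℝ) ^ 8 :=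
          mul_le_mul h5 hpow8 (pow_nonneg hH0 _) (by positivity)
        linarith
    _ = (290 * 45 ^ 8 / 49 ^ 9 : ℝ) * w ^ 2 := by ring
    _ ≤ 3 * w ^ 2 := by
        have hc : (290 * 45 ^ 8 / 49 ^ 9 : ℝ) ≤ 3 := by norm_num
        exact mul_le_mul_of_nonneg_right hc (sq_nonneg w)
end

section
/- Let w be a real number with 0 ≤ w < 3/7, let m ≥ 100 be an integer, and define h(t) = (1 + w² − t)² + 4·w²·t and g(t) = (t + w²)·(h(t))^{m−1}. Then for every real t with 2·w² ≤ t ≤ 1, one has g(t) ≤ max{3·w², 2/m}. -/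
lemma stmt_18_aux (s a x : ℝ) (hxd : x = a * (2 - a) - 4 * s)
    (hs0 : 0 ≤ s) (hs9 : s ≤ 9/49) (ha3 : 3*s ≤ a) (ha1 : a ≤ 1+s)
    (hxb : x < 1/5) : a - 3*s ≤ 1.98 * x := by
  subst hxd
  nlinarith [mul_nonneg (by linarith : (0:ℝ) ≤ a - 3*s) (by linarith : (0:ℝ) ≤ 1+s-a),
    mul_nonneg (by linarith : (0:ℝ) ≤ a - 3*s) (by linarith : (0:ℝ) ≤ 1/5 - (a*(2-a)-4*s)),
    mul_nonneg (by linarith : (0:ℝ) ≤ 1+s-a) (by linarith : (0:ℝ) ≤ 1/5 - (a*(2-a)-4*s)),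
    mul_nonneg hs0 (by linarith : (0:ℝ) ≤ 9/49 - s), sq_nonneg (a - 3*s), sq_nonneg a]

theorem stmt_18 (w : ℝ) (hw0 : 0 ≤ w) (hw : w < 3 / 7) (m : ℕ) (hm : 100 ≤ m)
    (t : ℝ) (ht1 : 2 * w ^ 2 ≤ t) (ht2 : t ≤ 1) :
    (t + w ^ 2) * ((1 + w ^ 2 - t) ^ 2 + 4 * w ^ 2 * t) ^ (m - 1) ≤
      max (3 * w ^ 2) (2 / (m : ℝ)) := by
  have hs0 : (0:ℝ) ≤ w ^ 2 := sq_nonneg w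
  have hs9 : w ^ 2 ≤ 9 / 49 := by nlinarith
  set s : ℝ := w ^ 2 with hs
  set a : ℝ := t + s with ha
  set x : ℝ := a * (2 - a) - 4 * s with hx
  have hbase : (1 + s - t) ^ 2 + 4 * s * t = 1 - x := by
    simp only [hx, ha]; ring
  have hm1 : (1:ℕ) ≤ m := by omega
  have hmR : (100:ℝ) ≤ (m:ℝ) := by exact_mod_cast hm
  have hmpos : (0:ℝ) < (m:ℝ) := by linarith
  set n : ℕ := m - 1 with hn
  have hnR : ((n:ℝ)) = (m:ℝ) - 1 := by
    simp only [hn]; push_cast [Nat.cast_sub hm1]; ring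
  have ha3 : 3 * s ≤ a := by simp only [ha]; linarith
  have ha1 : a ≤ 1 + s := by simp only [ha]; linarith
  have hx0 : 0 ≤ x := by nlinarith [sq_nonneg (a - 3*s), sq_nonneg (1 + s - a)]
  have hx1 : x ≤ 1 := by nlinarith [sq_nonneg (1 + s - t)]
  have hpn : (0:ℝ) ≤ (1 - x)^n := pow_nonneg (by linarith) n
  rw [hbase]
  clear_value s a x n
  rcases le_or_gt (1/5 : ℝ) x with hxb | hxb
  · -- x large: base ≤ 4/5, geometric decay beats 2/m
    have hpow : (1 - x) ^ n ≤ (4/5 : ℝ) ^ n :=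
      pow_le_pow_left₀ (by linarith) (by linarith) n
    have hkey : (m:ℝ) * (4/5 : ℝ) ^ n ≤ 1 := by
      obtain ⟨k, hk⟩ : ∃ k, m = 100 + k := ⟨m - 100, by omega⟩
      have hnk : n = 99 + k := by omega
      have hk0 : (0:ℝ) ≤ (k:ℝ) := Nat.cast_nonneg k
      have hbern : (1:ℝ) + k * (1/4) ≤ (1 + 1/4) ^ k :=
        one_add_mul_le_pow (by norm_num) k
      have h54e : ((5:ℝ)/4) ^ k = (1 + 1/4) ^ k := by norm_num
      have hlin : ((100:ℝ) + k) ≤ 100 * (5/4)^k := by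
        rw [h54e]; nlinarith
      have h45k : (0:ℝ) ≤ (4/5:ℝ)^k := by positivity
      have h54 : ((100:ℝ) + k) * (4/5)^k ≤ 100 := by
        calc ((100:ℝ) + k) * (4/5)^k ≤ (100 * (5/4)^k) * (4/5)^k :=
              mul_le_mul_of_nonneg_right hlin h45k
          _ = 100 * ((5/4 * (4/5) : ℝ))^k := by rw [mul_pow]; ring
          _ = 100 := by norm_num
      have hcast : (m:ℝ) = 100 + k := by rw [hk]; push_cast; ring
      have h99 : (0:ℝ) ≤ (4/5:ℝ)^99 := by positivity
      calc (m:ℝ) * (4/5:ℝ)^n = ((100:ℝ) + k) * (4/5)^k * (4/5)^99 := by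
            rw [hcast, hnk, pow_add]; ring
        _ ≤ 100 * (4/5)^99 := mul_le_mul_of_nonneg_right h54 h99
        _ ≤ 1 := by norm_num
    have hstep : a * (1 - x) ^ n ≤ 2 * (4/5:ℝ)^n :=
      mul_le_mul (by linarith) hpow hpn (by norm_num)
    have hfin : (2:ℝ) * (4/5)^n ≤ 2 / m := by
      rw [le_div_iff₀ hmpos]
      have h2 := mul_le_mul_of_nonneg_left hkey (by norm_num : (0:ℝ) ≤ 2)
      calc (2:ℝ) * (4/5)^n * m = 2 * ((m:ℝ) * (4/5)^n) := by ring
        _ ≤ 2 * 1 := h2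
        _ = 2 := by norm_num
    calc a * (1 - x)^n ≤ 2/(m:ℝ) := le_trans hstep hfin
      _ ≤ max (3*s) (2/(m:ℝ)) := le_max_right _ _
  · -- x small: Bernoulli bound
    set M : ℝ := max (3*s) (2/(m:ℝ)) with hM
    have hM3 : 3*s ≤ M := le_max_left _ _
    have hM2 : 2/(m:ℝ) ≤ M := le_max_right _ _
    have hMn : (1.98:ℝ) ≤ M * n := by
      have h1 : (1.98:ℝ) ≤ (2/(m:ℝ)) * ((m:ℝ) - 1) := by
        rw [div_mul_eq_mul_div, le_div_iff₀ hmpos]; nlinarith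
      have h2 : (2/(m:ℝ)) * ((m:ℝ) - 1) ≤ M * ((m:ℝ) - 1) :=
        mul_le_mul_of_nonneg_right hM2 (by linarith)
      rw [hnR]
      linarith
    have hA : a - 3*s ≤ 1.98 * x := stmt_18_aux s a x hx hs0 hs9 ha3 ha1 hxb
    have haM : a ≤ M * (1 + n * x) := by
      have he : M * (1 + n*x) = M + (M * n) * x := by ring
      have hprod : (0:ℝ) ≤ (M * n - 1.98) * x :=
        mul_nonneg (by linarith) hx0
      rw [he]
      linarith [mul_le_mul_of_nonneg_right hMn hx0]
    have hber : (1 + (n:ℝ) * x) * (1 - x) ^ n ≤ 1 := by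
      have h1 : (1:ℝ) + n * x ≤ (1 + x) ^ n :=
        one_add_mul_le_pow (by linarith : (-2:ℝ) ≤ x) n
      have h2 : (1 + x)^n * (1 - x)^n ≤ 1 := by
        rw [← mul_pow]
        have he1 : (1 + x) * (1 - x) = 1 - x^2 := by ring
        have hf : (1 - x) * (1 + x) = 1 - x^2 := by ring
        have he2 : (0:ℝ) ≤ 1 - x^2 := by
          rw [← hf]; exact mul_nonneg (by linarith) (by linarith)
        have he3 : (1:ℝ) - x^2 ≤ 1 := by linarith [sq_nonneg x]
        rw [he1]
        exact pow_le_one₀ he2 he3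
      calc (1 + (n:ℝ) * x) * (1 - x) ^ n ≤ (1 + x)^n * (1 - x)^n :=
            mul_le_mul_of_nonneg_right h1 hpn
        _ ≤ 1 := h2
    have hM0 : (0:ℝ) ≤ M := le_trans (by linarith) hM3
    calc a * (1 - x)^n ≤ (M * (1 + n*x)) * (1 - x)^n :=
          mul_le_mul_of_nonneg_right haM hpn
      _ = M * ((1 + n*x) * (1 - x)^n) := mul_assoc _ _ _
      _ ≤ M * 1 := mul_le_mul_of_nonneg_left hber hM0
      _ = M := mul_one M
end

section
/- Let w be a real number with 0 ≤ w < 3/7, let m ≥ 100 be an integer, and define f(x, y) = √(x² + y²) · (√((1 + y² − x²)² + 4·x²·y²))^{m−1}. Then max{ f(x, y) : √2·w ≤ |x| ≤ 1, |y| ≤ w } ≤ max{ √3·w, √2/√m }. -/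
set_option maxHeartbeats 1000000

lemma aux2 (n : ℕ) : (0:ℝ) ≤ (n:ℝ) * ((n:ℝ) - 1) := by
  rcases n with _ | k
  · norm_num
  · push_cast
    nlinarith [Nat.cast_nonneg (α := ℝ) k]

lemma aux3 (n : ℕ) : (0:ℝ) ≤ (n:ℝ) * ((n:ℝ) - 1) * ((n:ℝ) - 2) := by
  rcases n with _ | _ | k
  · norm_num
  · norm_num
  · push_cast
    have h : (0:ℝ) ≤ (k:ℝ) := Nat.cast_nonneg k
    nlinarith [mul_nonneg (mul_nonneg h (by linarith : (0:ℝ) ≤ (k:ℝ)+1)) (by linarith : (0:ℝ) ≤ (k:ℝ)+2)]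

lemma L0 (t : ℝ) (ht : 0 ≤ t) (n : ℕ) :
    1 + (n:ℝ)*t + (n:ℝ)*((n:ℝ)-1)/2*t^2 + (n:ℝ)*((n:ℝ)-1)*((n:ℝ)-2)/6*t^3 ≤ (1+t)^n := by
  induction n with
  | zero => norm_num
  | succ n ih =>
    have h3 := mul_le_mul_of_nonneg_left ih (by linarith : (0:ℝ) ≤ 1 + t)
    have h4 : (1+t)^(n+1) = (1+t)*(1+t)^n := by ring
    rw [h4]
    push_cast
    nlinarith [mul_nonneg (aux3 n) (pow_nonneg ht 4)]

lemma L1 (t : ℝ) (ht : 0 ≤ t) (ht1 : t ≤ 1) (n : ℕ) :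
    (1-t)^n * (1 + (n:ℝ)*t + (n:ℝ)*((n:ℝ)-1)/2*t^2 + (n:ℝ)*((n:ℝ)-1)*((n:ℝ)-2)/6*t^3) ≤ 1 := by
  have h0 := L0 t ht n
  have h1 : (0:ℝ) ≤ 1 - t := by linarith
  calc (1-t)^n * (1 + (n:ℝ)*t + (n:ℝ)*((n:ℝ)-1)/2*t^2 + (n:ℝ)*((n:ℝ)-1)*((n:ℝ)-2)/6*t^3)
      ≤ (1-t)^n * (1+t)^n := mul_le_mul_of_nonneg_left h0 (pow_nonneg h1 n)
    _ = (1 - t^2)^n := by rw [← mul_pow]; ring_nf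
    _ ≤ 1 := pow_le_one₀ (by nlinarith) (by nlinarith)

lemma sqrt_pow_eq (x : ℝ) (hx : 0 ≤ x) (n : ℕ) :
    Real.sqrt (x ^ n) = (Real.sqrt x) ^ n := by
  induction n with
  | zero => simp
  | succ n ih => rw [pow_succ, pow_succ, Real.sqrt_mul (pow_nonneg hx n), ih]

-- key inequality in opaque variables
lemma main_bound (w A S2 : ℝ) (n : ℕ) (hn : 99 ≤ (n:ℝ))
    (hw0 : 0 ≤ w) (hw2 : w^2 ≤ 9/49)
    (hA : 0 ≤ A) (hAub : A ≤ 1 + w^2) (hS2 : 0 ≤ S2)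
    (hSB1 : S2 ≤ 1 - (2/3)*A + A^2)
    (hSB2 : S2 ≤ (1-A)^2 + 4*w^2)
    (hc : 3*w^2 < A) :
    A * S2^n ≤ 2/((n:ℝ)+1) := by
  have hmr : (0:ℝ) < (n:ℝ) + 1 := by linarith
  rcases le_or_gt A (1/4) with hmid | hmid
  · -- small A
    have ht0 : (0:ℝ) ≤ 5/12*A := by linarith
    have ht1 : 5/12*A ≤ 1 := by linarith
    have hS2t : S2 ≤ 1 - 5/12*A := by
      nlinarith [mul_nonneg hA (by linarith : (0:ℝ) ≤ 1/4 - A)]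
    have hL1 := L1 (5/12*A) ht0 ht1 n
    obtain ⟨P, hPdef⟩ : ∃ P : ℝ, P = 1 + (n:ℝ)*(5/12*A) + (n:ℝ)*((n:ℝ)-1)/2*(5/12*A)^2
        + (n:ℝ)*((n:ℝ)-1)*((n:ℝ)-2)/6*(5/12*A)^3 := ⟨_, rfl⟩
    rw [← hPdef] at hL1
    have hP0 : 0 < P := by
      rw [hPdef]
      have e1 : 0 ≤ (n:ℝ)*(5/12*A) := by nlinarith
      have e2 : 0 ≤ (n:ℝ)*((n:ℝ)-1)/2*(5/12*A)^2 :=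
        mul_nonneg (by linarith [aux2 n]) (sq_nonneg _)
      have e3 : 0 ≤ (n:ℝ)*((n:ℝ)-1)*((n:ℝ)-2)/6*(5/12*A)^3 :=
        mul_nonneg (by linarith [aux3 n]) (by positivity)
      linarith
    have hpow : S2^n ≤ (1-5/12*A)^n := pow_le_pow_left₀ hS2 hS2t n
    have hinv : (1-5/12*A)^n ≤ 1/P := (le_div_iff₀ hP0).mpr hL1
    have hmain : A * ((n:ℝ)+1) ≤ 2 * P := by
      rw [hPdef]
      have hcube : 0 ≤ (n:ℝ)*((n:ℝ)-1)*((n:ℝ)-2)/6*(5/12*A)^3 :=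
        mul_nonneg (by linarith [aux3 n]) (by positivity)
      nlinarith [sq_nonneg ((n:ℝ)*A*(3/40) - 6/5), sq_nonneg A,
        mul_nonneg (mul_nonneg (by linarith : (0:ℝ) ≤ (n:ℝ) - 99) (by linarith : (0:ℝ) ≤ (n:ℝ))) (sq_nonneg A)]
    calc A * S2^n ≤ A * (1/P) := mul_le_mul_of_nonneg_left (le_trans hpow hinv) hA
      _ = A / P := by ring
      _ ≤ 2/((n:ℝ)+1) := by rw [div_le_div_iff₀ hP0 hmr]; linarith
  · -- big A
    have hS2t : S2 ≤ 1 - (1/16 : ℝ) := by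
      have hclaim : 2*A - A^2 - 4*w^2 ≥ 1/16 := by
        nlinarith [mul_nonneg (by linarith : (0:ℝ) ≤ A - 3*w^2) (by linarith : (0:ℝ) ≤ 1 + w^2 - A),
          mul_nonneg (by linarith : (0:ℝ) ≤ A - 1/4) (by linarith : (0:ℝ) ≤ 1 + w^2 - A),
          mul_nonneg (by linarith : (0:ℝ) ≤ 9/49 - w^2) (by linarith : (0:ℝ) ≤ A - 1/4),
          mul_nonneg (by linarith : (0:ℝ) ≤ 9/49 - w^2) (by linarith : (0:ℝ) ≤ 1 + w^2 - A),
          mul_nonneg (by linarith : (0:ℝ) ≤ 9/49 - w^2) (by linarith : (0:ℝ) ≤ A - 3*w^2)]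
      nlinarith
    have hL1 := L1 (1/16) (by norm_num) (by norm_num) n
    obtain ⟨P, hPdef⟩ : ∃ P : ℝ, P = 1 + (n:ℝ)*(1/16) + (n:ℝ)*((n:ℝ)-1)/2*(1/16)^2
        + (n:ℝ)*((n:ℝ)-1)*((n:ℝ)-2)/6*(1/16)^3 := ⟨_, rfl⟩
    rw [← hPdef] at hL1
    have hP0 : 0 < P := by
      rw [hPdef]
      nlinarith [aux2 n, aux3 n]
    have hpow : S2^n ≤ (1-(1/16:ℝ))^n := pow_le_pow_left₀ hS2 hS2t n
    have hinv : (1-(1/16:ℝ))^n ≤ 1/P := (le_div_iff₀ hP0).mpr hL1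
    have hmain : A * ((n:ℝ)+1) ≤ 2 * P := by
      rw [hPdef]
      have h1 : (0:ℝ) ≤ ((n:ℝ) - 99) * ((n:ℝ) - 98) := by nlinarith
      have h2 : (0:ℝ) ≤ ((n:ℝ) - 99) * ((n:ℝ) - 98) * ((n:ℝ) - 97) := by nlinarith
      nlinarith [mul_nonneg (by linarith : (0:ℝ) ≤ 1 + w^2 - A) hmr.le, hw2]
    calc A * S2^n ≤ A * (1/P) := mul_le_mul_of_nonneg_left (le_trans hpow hinv) hA
      _ = A / P := by ring
      _ ≤ 2/((n:ℝ)+1) := by rw [div_le_div_iff₀ hP0 hmr]; linarith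

theorem stmt_19 (w : ℝ) (hw0 : 0 ≤ w) (hw : w < 3 / 7) (m : ℕ) (hm : 100 ≤ m)
    (x y : ℝ) (hx1 : Real.sqrt 2 * w ≤ |x|) (hx2 : |x| ≤ 1) (hy : |y| ≤ w) :
    Real.sqrt (x ^ 2 + y ^ 2) *
        (Real.sqrt ((1 + y ^ 2 - x ^ 2) ^ 2 + 4 * x ^ 2 * y ^ 2)) ^ (m - 1) ≤
      max (Real.sqrt 3 * w) (Real.sqrt 2 / Real.sqrt m) := by
  obtain ⟨n, rfl⟩ : ∃ n, m = n + 1 := ⟨m - 1, by omega⟩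
  have hn : 99 ≤ n := by omega
  have hnr : (99:ℝ) ≤ (n:ℝ) := by exact_mod_cast hn
  have hxx : x^2 ≤ 1 := by nlinarith [sq_abs x, abs_nonneg x]
  have hyy : y^2 ≤ w^2 := by nlinarith [sq_abs y, abs_nonneg y]
  have hxl : 2*w^2 ≤ x^2 := by
    have h := mul_self_le_mul_self (by positivity) hx1
    have h2 : Real.sqrt 2 * Real.sqrt 2 = 2 := Real.mul_self_sqrt (by norm_num)
    nlinarith [sq_abs x]
  have hw2 : w^2 ≤ 9/49 := by nlinarith
  obtain ⟨A, hAdef⟩ : ∃ A : ℝ, A = x^2 + y^2 := ⟨_, rfl⟩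
  obtain ⟨S2, hS2def⟩ : ∃ S2 : ℝ, S2 = (1 + y^2 - x^2)^2 + 4*x^2*y^2 := ⟨_, rfl⟩
  have hA : 0 ≤ A := by rw [hAdef]; positivity
  have hS2 : 0 ≤ S2 := by rw [hS2def]; positivity
  have hAub : A ≤ 1 + w^2 := by rw [hAdef]; linarith
  have hSB1 : S2 ≤ 1 - (2/3)*A + A^2 := by
    rw [hS2def, hAdef]; nlinarith [hxl, hyy]
  have hSB2 : S2 ≤ (1-A)^2 + 4*w^2 := by
    rw [hS2def, hAdef]; nlinarith [hyy]
  have hexp : n + 1 - 1 = n := rfl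
  rw [hexp, ← hAdef, ← hS2def]
  have key : Real.sqrt A * Real.sqrt S2 ^ n = Real.sqrt (A * S2 ^ n) := by
    rw [Real.sqrt_mul hA, sqrt_pow_eq S2 hS2 n]
  rw [key]
  rcases le_or_gt A (3*w^2) with hc | hc
  · -- f ≤ √3 w
    have hS2le1 : S2 ≤ 1 := by
      nlinarith [mul_le_mul_of_nonneg_left hc hA,
        mul_nonneg hA (by linarith : (0:ℝ) ≤ 9/49 - w^2)]
    have h1 : A * S2^n ≤ 3 * w^2 := by
      calc A * S2^n ≤ A * 1 := mul_le_mul_of_nonneg_left (pow_le_one₀ hS2 hS2le1) hA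
        _ = A := mul_one A
        _ ≤ 3*w^2 := hc
    refine le_trans ?_ (le_max_left _ _)
    calc Real.sqrt (A * S2^n) ≤ Real.sqrt (3*w^2) := Real.sqrt_le_sqrt h1
      _ = Real.sqrt 3 * w := by rw [Real.sqrt_mul (by norm_num), Real.sqrt_sq hw0]
  · -- f ≤ √2/√m
    have h2m := main_bound w A S2 n hnr hw0 hw2 hA hAub hS2 hSB1 hSB2 hc
    refine le_trans ?_ (le_max_right _ _)
    have hcast : ((n+1 : ℕ) : ℝ) = (n:ℝ) + 1 := by push_cast; ring
    calc Real.sqrt (A * S2^n) ≤ Real.sqrt (2/((n:ℝ)+1)) := Real.sqrt_le_sqrt h2m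
      _ = Real.sqrt 2 / Real.sqrt ((n:ℝ)+1) := Real.sqrt_div (by norm_num) _
      _ = Real.sqrt 2 / Real.sqrt ((n+1 : ℕ) : ℝ) := by rw [hcast]
end
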